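/- arXiv:1012.4850 — 7 statements merged into one kernel-verified Lean document; each statement's English description precedes it below -/
import Mathlib

section
/- For all 1 < p < ∞ with p ≠ 2, one has cot(π/(2 p*)) < p* - 1, where p* = max(p, p/(p-1)). -/
open Real

private lemma aux1 {t : ℝ} (h0 : 0 < t) (h1 : t < π/2) :
    t < Real.sin t + (1 - Real.cos t) := by
  have key : StrictMonoOn (fun t => Real.sin t - Real.cos t - t) (Set.Icc 0 (π/2)) := by
    apply strictMonoOn_of_deriv_pos (convex_Icc _ _)
    · fun_prop
    · intro x hx
      rw [interior_Icc] at hx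
      have hd : HasDerivAt (fun t => Real.sin t - Real.cos t - t)
          (Real.cos x - (-Real.sin x) - 1) x :=
        ((Real.hasDerivAt_sin x).sub (Real.hasDerivAt_cos x)).sub (hasDerivAt_id x)
      rw [hd.deriv]
      have hs : 0 < Real.sin x := Real.sin_pos_of_pos_of_lt_pi hx.1
        (lt_trans hx.2 (by linarith [Real.pi_pos]))
      have hc : 0 < Real.cos x := Real.cos_pos_of_mem_Ioo
        ⟨by linarith [Real.pi_pos, hx.1], hx.2⟩
      nlinarith [Real.sin_sq_add_cos_sq x]
  have h2 := key (Set.left_mem_Icc.2 (by linarith [Real.pi_pos]))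
    ⟨le_of_lt h0, le_of_lt h1⟩ h0
  simp at h2
  linarith

private lemma aux2 {x : ℝ} (h0 : 0 < x) (h1 : x < π/4) :
    Real.cot x < (π - 2*x) / (2*x) := by
  set h : ℝ → ℝ := fun y => (π - 2*y)/2 - y * (Real.cos y / Real.sin y) with hh
  have hpi : 0 < π := Real.pi_pos
  have hsin : ∀ y ∈ Set.Icc x (π/4), Real.sin y ≠ 0 := by
    intro y hy
    exact ne_of_gt (Real.sin_pos_of_pos_of_lt_pi (lt_of_lt_of_le h0 hy.1)
      (by linarith [hy.2]))
  have key : StrictAntiOn h (Set.Icc x (π/4)) := by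
    apply strictAntiOn_of_deriv_neg (convex_Icc _ _)
    · apply ContinuousOn.sub (by fun_prop)
      exact continuousOn_id.mul ((Real.continuous_cos.continuousOn).div
        (Real.continuous_sin.continuousOn) hsin)
    · intro y hy
      rw [interior_Icc] at hy
      have hy0 : 0 < y := lt_trans h0 hy.1
      have hy1 : y < π/4 := hy.2
      have hsy : 0 < Real.sin y :=
        Real.sin_pos_of_pos_of_lt_pi hy0 (by linarith)
      have hd1 : HasDerivAt (fun y : ℝ => (π - 2*y)/2) ((0 - 2*1)/2) y := by
        exact (((hasDerivAt_const y π).sub ((hasDerivAt_id y).const_mul 2)).div_const 2)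
      have hd2 : HasDerivAt (fun y => Real.cos y / Real.sin y)
          ((-Real.sin y * Real.sin y - Real.cos y * Real.cos y) / Real.sin y ^ 2) y :=
        (Real.hasDerivAt_cos y).div (Real.hasDerivAt_sin y) (ne_of_gt hsy)
      have hnum : (-Real.sin y * Real.sin y - Real.cos y * Real.cos y) = -1 := by
        nlinarith [Real.sin_sq_add_cos_sq y]
      rw [hnum] at hd2
      have hd3 : HasDerivAt (fun y => y * (Real.cos y / Real.sin y))
          (1 * (Real.cos y / Real.sin y) + y * (-1 / Real.sin y ^ 2)) y :=
        (hasDerivAt_id y).mul hd2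
      have hd : HasDerivAt h ((0 - 2*1)/2 -
          (1 * (Real.cos y / Real.sin y) + y * (-1 / Real.sin y ^ 2))) y := hd1.sub hd3
      rw [hd.deriv]
      -- key inequality from aux1
      have ha := aux1 (t := 2*y) (by linarith) (by linarith)
      rw [Real.sin_two_mul, Real.cos_two_mul] at ha
      have h2 : y < Real.sin y ^ 2 + Real.sin y * Real.cos y := by
        nlinarith [Real.sin_sq_add_cos_sq y]
      have heq : (0 - 2*1)/2 - (1 * (Real.cos y / Real.sin y) + y * (-1 / Real.sin y ^ 2))
          = (y - Real.sin y ^ 2 - Real.sin y * Real.cos y) / Real.sin y ^ 2 := by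
        field_simp
        ring
      rw [heq]
      exact div_neg_of_neg_of_pos (by linarith) (by positivity)
  have hx4 : x ≤ π/4 := le_of_lt h1
  have hmem1 : x ∈ Set.Icc x (π/4) := ⟨le_refl x, hx4⟩
  have hmem2 : π/4 ∈ Set.Icc x (π/4) := ⟨hx4, le_refl _⟩
  have hlt := key hmem1 hmem2 h1
  have hval : h (π/4) = 0 := by
    simp only [hh, Real.cos_pi_div_four, Real.sin_pi_div_four]
    rw [div_self (by positivity)]
    ring
  rw [hval] at hlt
  have hsx : 0 < Real.sin x := Real.sin_pos_of_pos_of_lt_pi h0 (by linarith)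
  have hcot : Real.cot x = Real.cos x / Real.sin x := Real.cot_eq_cos_div_sin x
  rw [hcot, lt_div_iff₀ (by positivity)]
  have : x * (Real.cos x / Real.sin x) < (π - 2*x)/2 := by
    simp only [hh] at hlt
    linarith
  nlinarith

theorem cot_lt_pstar_sub_one (p : ℝ) (hp1 : 1 < p) (hp2 : p ≠ 2) :
    Real.cot (π / (2 * max p (p / (p - 1)))) < max p (p / (p - 1)) - 1 := by
  set q := max p (p / (p - 1)) with hq
  have hpi : 0 < π := Real.pi_pos
  have hq2 : 2 < q := by
    rcases lt_trichotomy p 2 with h | h | h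
    · have hp1' : 0 < p - 1 := by linarith
      have : 2 < p / (p - 1) := by
        rw [lt_div_iff₀ hp1']
        linarith
      exact lt_of_lt_of_le this (le_max_right _ _)
    · exact absurd h hp2
    · exact lt_of_lt_of_le h (le_max_left _ _)
  have hq0 : 0 < q := by linarith
  set x := π / (2 * q) with hx
  have hx0 : 0 < x := by positivity
  have hx4 : x < π / 4 := by
    rw [hx, div_lt_div_iff₀ (by positivity) (by norm_num)]
    nlinarith
  have h := aux2 hx0 hx4
  have heq : (π - 2*x) / (2*x) = q - 1 := by
    rw [hx]
    field_simp
  rw [heq] at h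
  exact h
end

section
/- Let H be a real inner product space, 1 < p < ∞, p* = max(p, p/(p-1)), α_p = p(1 - 1/p*)^{p-1}, V(x,y) = ‖y‖^p - (p*-1)^p ‖x‖^p, and U(x,y) = α_p (‖y‖ - (p*-1)‖x‖)(‖x‖ + ‖y‖)^{p-1}. Then V(x,y) ≤ U(x,y) for all x, y ∈ H. -/
open Real Set

/-- If `f'` is antitone on `(l,r)` (so `f` is concave) and `f` has a critical zero at an interior
point `t₀`, then `f ≤ 0` on `[l,r]`. -/
private lemma tangent_bound {f f' : ℝ → ℝ} {l r t₀ : ℝ}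
    (hcont : ContinuousOn f (Icc l r))
    (hd : ∀ s ∈ Ioo l r, HasDerivAt f (f' s) s)
    (hanti : AntitoneOn f' (Ioo l r))
    (ht₀ : t₀ ∈ Ioo l r) (hf0 : f t₀ = 0) (hf'0 : f' t₀ = 0)
    {t : ℝ} (ht : t ∈ Icc l r) : f t ≤ 0 := by
  obtain ⟨htl, htr⟩ := ht
  obtain ⟨hl0, hr0⟩ := ht₀
  rcases lt_trichotomy t t₀ with h | h | h
  · obtain ⟨c, hc, hc'⟩ := exists_hasDerivAt_eq_slope f f' h
      (hcont.mono (Icc_subset_Icc htl hr0.le))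
      (fun x hx => hd x ⟨lt_of_le_of_lt htl hx.1, lt_trans hx.2 hr0⟩)
    have hcmem : c ∈ Ioo l r := ⟨lt_of_le_of_lt htl hc.1, lt_trans hc.2 hr0⟩
    have h1 : f' t₀ ≤ f' c := hanti hcmem ⟨hl0, hr0⟩ hc.2.le
    rw [hf'0, hc', hf0] at h1
    have hpos : 0 < t₀ - t := by linarith
    have := (le_div_iff₀ hpos).mp h1
    linarith
  · rw [h, hf0]
  · obtain ⟨c, hc, hc'⟩ := exists_hasDerivAt_eq_slope f f' h
      (hcont.mono (Icc_subset_Icc hl0.le htr))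
      (fun x hx => hd x ⟨lt_trans hl0 hx.1, lt_of_lt_of_le hx.2 htr⟩)
    have hcmem : c ∈ Ioo l r := ⟨lt_trans hl0 hc.1, lt_of_lt_of_le hc.2 htr⟩
    have h1 : f' c ≤ f' t₀ := hanti ⟨hl0, hr0⟩ hcmem hc.1.le
    rw [hf'0, hc', hf0] at h1
    have hpos : 0 < t - t₀ := by linarith
    have := (div_le_iff₀ hpos).mp h1
    linarith

/-- If `f'` is monotone on `(l,r)` (so `f` is convex) and `f` is nonpositive at both endpoints,
then `f ≤ 0` on `[l,r]`. -/
private lemma convex_bound {f f' : ℝ → ℝ} {l r : ℝ}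
    (hcont : ContinuousOn f (Icc l r))
    (hd : ∀ s ∈ Ioo l r, HasDerivAt f (f' s) s)
    (hmono : MonotoneOn f' (Ioo l r))
    (hfl : f l ≤ 0) (hfr : f r ≤ 0)
    {t : ℝ} (ht : t ∈ Icc l r) : f t ≤ 0 := by
  obtain ⟨htl, htr⟩ := ht
  rcases eq_or_lt_of_le htl with h | hlt
  · rwa [← h]
  rcases eq_or_lt_of_le htr with h | hrt
  · rwa [h]
  obtain ⟨c₁, hc₁, hc₁'⟩ := exists_hasDerivAt_eq_slope f f' hlt
    (hcont.mono (Icc_subset_Icc le_rfl htr))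
    (fun x hx => hd x ⟨hx.1, lt_trans hx.2 hrt⟩)
  obtain ⟨c₂, hc₂, hc₂'⟩ := exists_hasDerivAt_eq_slope f f' hrt
    (hcont.mono (Icc_subset_Icc htl le_rfl))
    (fun x hx => hd x ⟨lt_trans hlt hx.1, hx.2⟩)
  have hm1 : c₁ ∈ Ioo l r := ⟨hc₁.1, lt_trans hc₁.2 hrt⟩
  have hm2 : c₂ ∈ Ioo l r := ⟨lt_trans hlt hc₂.1, hc₂.2⟩
  have hle : f' c₁ ≤ f' c₂ := hmono hm1 hm2 (le_of_lt (lt_trans hc₁.2 hc₂.1))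
  rw [hc₁', hc₂'] at hle
  have h1 : 0 < t - l := by linarith
  have h2 : 0 < r - t := by linarith
  rw [div_le_div_iff₀ h1 h2] at hle
  nlinarith

set_option maxHeartbeats 2000000 in
private lemma G_nonpos {p q t : ℝ} (hp : 1 < p) (hp2 : p ≠ 2) (hq : 1 < q)
    (hend1 : 2 < p → 1 ≤ p * (q / (1 + q)) ^ (p - 1))
    (hend2 : p < 2 → p * (q / (1 + q)) ^ (p - 1) * q ≤ q ^ p)
    (ht0 : 0 ≤ t) (ht1 : t ≤ 1) :
    (1 - t) ^ p - q ^ p * t ^ p ≤ p * (q / (1 + q)) ^ (p - 1) * (1 - (1 + q) * t) := by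
  have hq0 : (0:ℝ) < q := by linarith
  have hk0 : (0:ℝ) < 1 + q := by linarith
  set α : ℝ := p * (q / (1 + q)) ^ (p - 1) with hα
  set c : ℝ := q ^ p with hc
  set f : ℝ → ℝ := fun s => (1 - s) ^ p - c * s ^ p - α * (1 - (1 + q) * s) with hf
  set f₁ : ℝ → ℝ := fun s => -(p * (1 - s) ^ (p - 1)) - c * (p * s ^ (p - 1)) + α * (1 + q)
    with hf₁
  set f₂ : ℝ → ℝ := fun s => p * (p - 1) * (1 - s) ^ (p - 2) - c * (p * (p - 1) * s ^ (p - 2))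
    with hf₂
  suffices h : f t ≤ 0 by
    simp only [hf] at h; linarith
  -- derivatives
  have hd : ∀ s ∈ Ioo (0:ℝ) 1, HasDerivAt f (f₁ s) s := by
    intro s hs
    have h1 : HasDerivAt (fun s : ℝ => 1 - s) (-1) s := (hasDerivAt_id s).const_sub 1
    have h2 : HasDerivAt (fun s : ℝ => (1 - s) ^ p) (-1 * p * (1 - s) ^ (p - 1)) s :=
      h1.rpow_const (Or.inl (by linarith [hs.2] : (1:ℝ) - s ≠ 0))
    have h3 : HasDerivAt (fun s : ℝ => s ^ p) (1 * p * s ^ (p - 1)) s :=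
      (hasDerivAt_id s).rpow_const (Or.inl hs.1.ne')
    have h4 : HasDerivAt (fun s : ℝ => 1 - (1 + q) * s) (-(1 + q)) s := by
      simpa using ((hasDerivAt_id s).const_mul (1 + q)).const_sub 1
    have := (h2.sub (h3.const_mul c)).sub (h4.const_mul α)
    refine this.congr_deriv ?_
    simp only [hf₁]; ring
  have hd1 : ∀ s ∈ Ioo (0:ℝ) 1, HasDerivAt f₁ (f₂ s) s := by
    intro s hs
    have h1 : HasDerivAt (fun s : ℝ => 1 - s) (-1) s := (hasDerivAt_id s).const_sub 1
    have h2 : HasDerivAt (fun s : ℝ => (1 - s) ^ (p - 1)) (-1 * (p - 1) * (1 - s) ^ (p - 1 - 1)) s :=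
      h1.rpow_const (Or.inl (by linarith [hs.2] : (1:ℝ) - s ≠ 0))
    have h3 : HasDerivAt (fun s : ℝ => s ^ (p - 1)) (1 * (p - 1) * s ^ (p - 1 - 1)) s :=
      (hasDerivAt_id s).rpow_const (Or.inl hs.1.ne')
    have := (((h2.const_mul p).neg).sub ((h3.const_mul p).const_mul c)).add_const (α * (1 + q))
    refine this.congr_deriv ?_
    simp only [hf₂]
    have : p - 1 - 1 = p - 2 := by ring
    rw [this]; ring
  -- continuity
  have hpc : (0:ℝ) ≤ p := by linarith
  have hpc1 : (0:ℝ) ≤ p - 1 := by linarith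
  have hcf : Continuous f := by
    apply Continuous.sub
    apply Continuous.sub
    · exact (continuous_const.sub continuous_id).rpow_const (fun x => Or.inr hpc)
    · exact continuous_const.mul (continuous_id.rpow_const (fun x => Or.inr hpc))
    · exact continuous_const.mul (continuous_const.sub (continuous_const.mul continuous_id))
  have hcf₁ : Continuous f₁ := by
    apply Continuous.add
    apply Continuous.sub
    · exact (continuous_const.mul
        ((continuous_const.sub continuous_id).rpow_const (fun x => Or.inr hpc1))).neg
    · exact continuous_const.mul
        (continuous_const.mul (continuous_id.rpow_const (fun x => Or.inr hpc1)))
    · exact continuous_const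
  -- critical point
  set t₀ : ℝ := 1 / (1 + q) with ht₀def
  have ht₀0 : 0 < t₀ := by positivity
  have ht₀1 : t₀ < 1 := by
    rw [ht₀def, div_lt_one hk0]; linarith
  have hbase : 1 - t₀ = q / (1 + q) := by
    rw [ht₀def]; field_simp; ring
  have hqp1 : q ^ p = q ^ (p - 1) * q := by
    rw [← Real.rpow_add_one hq0.ne' (p - 1)]; norm_num
  have hdivp : (q / (1 + q)) ^ p = q ^ p / (1 + q) ^ p := Real.div_rpow hq0.le hk0.le p
  have hdivp1 : (q / (1 + q)) ^ (p - 1) = q ^ (p - 1) / (1 + q) ^ (p - 1) :=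
    Real.div_rpow hq0.le hk0.le (p - 1)
  have honep : (1 / (1 + q)) ^ p = 1 / (1 + q) ^ p := by
    rw [Real.div_rpow zero_le_one hk0.le, Real.one_rpow]
  have honep1 : (1 / (1 + q)) ^ (p - 1) = 1 / (1 + q) ^ (p - 1) := by
    rw [Real.div_rpow zero_le_one hk0.le, Real.one_rpow]
  have hkp1 : (0:ℝ) < (1 + q) ^ (p - 1) := Real.rpow_pos_of_pos hk0 _
  have hft₀ : f t₀ = 0 := by
    simp only [hf]
    rw [hbase, hdivp, ht₀def, honep]
    have : (1 + q) * (1 / (1 + q)) = 1 := by field_simp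
    rw [this]
    ring
  have hf₁t₀ : f₁ t₀ = 0 := by
    simp only [hf₁]
    rw [hbase, hdivp1, ht₀def, honep1, hα, hdivp1, hc, hqp1]
    field_simp
    ring
  -- the splitting point
  set w : ℝ := q ^ (p / (p - 2)) with hw
  have hw0 : 0 < w := Real.rpow_pos_of_pos hq0 _
  set u : ℝ := 1 / (1 + w) with hu
  have hu0 : 0 < u := by positivity
  have hu1 : u < 1 := by
    rw [hu, div_lt_one (by linarith)]; linarith
  have hwpow : w ^ (p - 2) = q ^ p := by
    rw [hw, ← Real.rpow_mul hq0.le, div_mul_cancel₀]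
    intro h; exact hp2 (by linarith [sub_eq_zero.mp h])
  rcases lt_or_gt_of_ne hp2 with hplt | hpgt
  · -- case 1 < p < 2 : concave on [0,u], convex on [u,1]
    have hwq : w < q := by
      have : p / (p - 2) < 1 := by
        apply lt_of_lt_of_le (b := 0)
        · exact div_neg_of_pos_of_neg (by linarith) (by linarith)
        · norm_num
      calc w = q ^ (p / (p - 2)) := hw
        _ < q ^ (1:ℝ) := Real.rpow_lt_rpow_of_exponent_lt hq this
        _ = q := Real.rpow_one q
    have ht₀u : t₀ < u := by
      rw [ht₀def, hu, div_lt_div_iff₀ hk0 (by linarith)]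
      linarith
    -- f₂ ≤ 0 on (0, u)
    have hf₂neg : ∀ s ∈ Ioo (0:ℝ) u, f₂ s ≤ 0 := by
      intro s hs
      have hs0 : 0 < s := hs.1
      have hs1 : s < 1 := lt_trans hs.2 hu1
      have hws : w * s < 1 - s := by
        have := hs.2
        rw [hu, lt_div_iff₀ (by linarith)] at this
        nlinarith
      have hcomp : (1 - s) ^ (p - 2) ≤ (w * s) ^ (p - 2) :=
        Real.rpow_le_rpow_of_nonpos (by positivity) hws.le (by linarith)
      rw [Real.mul_rpow hw0.le hs0.le, hwpow] at hcomp
      have hpp : (0:ℝ) < p * (p - 1) := by nlinarith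
      have h2 : p * (p - 1) * (1 - s) ^ (p - 2) ≤ p * (p - 1) * (q ^ p * s ^ (p - 2)) :=
        mul_le_mul_of_nonneg_left hcomp hpp.le
      simp only [hf₂, hc]; nlinarith [h2]
    -- f₂ ≥ 0 on (u, 1)
    have hf₂pos : ∀ s ∈ Ioo u (1:ℝ), 0 ≤ f₂ s := by
      intro s hs
      have hs0 : 0 < s := lt_trans hu0 hs.1
      have hs1 : s < 1 := hs.2
      have hws : 1 - s < w * s := by
        have := hs.1
        rw [hu, div_lt_iff₀ (by linarith)] at this
        nlinarith
      have hcomp : (w * s) ^ (p - 2) ≤ (1 - s) ^ (p - 2) :=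
        Real.rpow_le_rpow_of_nonpos (by linarith) hws.le (by linarith)
      rw [Real.mul_rpow hw0.le hs0.le, hwpow] at hcomp
      have hpp : (0:ℝ) < p * (p - 1) := by nlinarith
      have h2 : p * (p - 1) * (q ^ p * s ^ (p - 2)) ≤ p * (p - 1) * (1 - s) ^ (p - 2) :=
        mul_le_mul_of_nonneg_left hcomp hpp.le
      simp only [hf₂, hc]; nlinarith [h2]
    -- concave part
    have hanti : AntitoneOn f₁ (Icc (0:ℝ) u) := by
      apply antitoneOn_of_deriv_nonpos (convex_Icc 0 u) hcf₁.continuousOn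
      · intro s hs
        rw [interior_Icc] at hs
        exact ((hd1 s ⟨hs.1, lt_trans hs.2 hu1⟩).differentiableAt).differentiableWithinAt
      · intro s hs
        rw [interior_Icc] at hs
        rw [(hd1 s ⟨hs.1, lt_trans hs.2 hu1⟩).deriv]
        exact hf₂neg s hs
    have hconc : ∀ s ∈ Icc (0:ℝ) u, f s ≤ 0 := by
      intro s hs
      exact tangent_bound hcf.continuousOn
        (fun x hx => hd x ⟨hx.1, lt_trans hx.2 hu1⟩)
        (hanti.mono Ioo_subset_Icc_self) ⟨ht₀0, ht₀u⟩ hft₀ hf₁t₀ hs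
    -- convex part
    have hmono : MonotoneOn f₁ (Icc u (1:ℝ)) := by
      apply monotoneOn_of_deriv_nonneg (convex_Icc u 1) hcf₁.continuousOn
      · intro s hs
        rw [interior_Icc] at hs
        exact ((hd1 s ⟨lt_trans hu0 hs.1, hs.2⟩).differentiableAt).differentiableWithinAt
      · intro s hs
        rw [interior_Icc] at hs
        rw [(hd1 s ⟨lt_trans hu0 hs.1, hs.2⟩).deriv]
        exact hf₂pos s hs
    have hf1le : f 1 ≤ 0 := by
      have h := hend2 hplt
      have e1 : ((1:ℝ) - 1) ^ p = 0 := by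
        norm_num [Real.zero_rpow (show p ≠ 0 by linarith)]
      have e2 : (1:ℝ) ^ p = 1 := Real.one_rpow p
      simp only [hf, e1, e2]
      have e3 : (0:ℝ) - c * 1 - α * (1 - (1 + q) * 1) = α * q - c := by ring
      rw [e3]
      linarith
    rcases le_total t u with h | h
    · exact hconc t ⟨ht0, h⟩
    · exact convex_bound hcf.continuousOn
        (fun x hx => hd x ⟨lt_trans hu0 hx.1, hx.2⟩)
        (hmono.mono Ioo_subset_Icc_self)
        (hconc u ⟨hu0.le, le_rfl⟩) hf1le ⟨h, ht1⟩
  · -- case p > 2 : convex on [0,u], concave on [u,1]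
    have hwq : q < w := by
      have h1 : (1:ℝ) < p / (p - 2) := by
        rw [lt_div_iff₀ (by linarith)]; linarith
      calc q = q ^ (1:ℝ) := (Real.rpow_one q).symm
        _ < q ^ (p / (p - 2)) := Real.rpow_lt_rpow_of_exponent_lt hq h1
        _ = w := hw.symm
    have ht₀u : u < t₀ := by
      rw [ht₀def, hu, div_lt_div_iff₀ (by linarith) hk0]
      linarith
    have hf₂neg : ∀ s ∈ Ioo u (1:ℝ), f₂ s ≤ 0 := by
      intro s hs
      have hs0 : 0 < s := lt_trans hu0 hs.1
      have hs1 : s < 1 := hs.2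
      have hws : 1 - s < w * s := by
        have := hs.1
        rw [hu, div_lt_iff₀ (by linarith)] at this
        nlinarith
      have hcomp : (1 - s) ^ (p - 2) ≤ (w * s) ^ (p - 2) :=
        Real.rpow_le_rpow (by linarith) hws.le (by linarith)
      rw [Real.mul_rpow hw0.le hs0.le, hwpow] at hcomp
      have hpp : (0:ℝ) < p * (p - 1) := by nlinarith
      have h2 : p * (p - 1) * (1 - s) ^ (p - 2) ≤ p * (p - 1) * (q ^ p * s ^ (p - 2)) :=
        mul_le_mul_of_nonneg_left hcomp hpp.le
      simp only [hf₂, hc]; nlinarith [h2]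
    have hf₂pos : ∀ s ∈ Ioo (0:ℝ) u, 0 ≤ f₂ s := by
      intro s hs
      have hs0 : 0 < s := hs.1
      have hs1 : s < 1 := lt_trans hs.2 hu1
      have hws : w * s < 1 - s := by
        have := hs.2
        rw [hu, lt_div_iff₀ (by linarith)] at this
        nlinarith
      have hcomp : (w * s) ^ (p - 2) ≤ (1 - s) ^ (p - 2) :=
        Real.rpow_le_rpow (by positivity) hws.le (by linarith)
      rw [Real.mul_rpow hw0.le hs0.le, hwpow] at hcomp
      have hpp : (0:ℝ) < p * (p - 1) := by nlinarith
      have h2 : p * (p - 1) * (q ^ p * s ^ (p - 2)) ≤ p * (p - 1) * (1 - s) ^ (p - 2) :=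
        mul_le_mul_of_nonneg_left hcomp hpp.le
      simp only [hf₂, hc]; nlinarith [h2]
    have hanti : AntitoneOn f₁ (Icc u (1:ℝ)) := by
      apply antitoneOn_of_deriv_nonpos (convex_Icc u 1) hcf₁.continuousOn
      · intro s hs
        rw [interior_Icc] at hs
        exact ((hd1 s ⟨lt_trans hu0 hs.1, hs.2⟩).differentiableAt).differentiableWithinAt
      · intro s hs
        rw [interior_Icc] at hs
        rw [(hd1 s ⟨lt_trans hu0 hs.1, hs.2⟩).deriv]
        exact hf₂neg s hs
    have hconc : ∀ s ∈ Icc u (1:ℝ), f s ≤ 0 := by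
      intro s hs
      exact tangent_bound hcf.continuousOn
        (fun x hx => hd x ⟨lt_trans hu0 hx.1, hx.2⟩)
        (hanti.mono Ioo_subset_Icc_self) ⟨ht₀u, ht₀1⟩ hft₀ hf₁t₀ hs
    have hmono : MonotoneOn f₁ (Icc (0:ℝ) u) := by
      apply monotoneOn_of_deriv_nonneg (convex_Icc 0 u) hcf₁.continuousOn
      · intro s hs
        rw [interior_Icc] at hs
        exact ((hd1 s ⟨hs.1, lt_trans hs.2 hu1⟩).differentiableAt).differentiableWithinAt
      · intro s hs
        rw [interior_Icc] at hs
        rw [(hd1 s ⟨hs.1, lt_trans hs.2 hu1⟩).deriv]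
        exact hf₂pos s hs
    have hf0le : f 0 ≤ 0 := by
      have := hend1 hpgt
      simp only [hf]
      have h00 : (0:ℝ) ^ p = 0 := Real.zero_rpow (by linarith : p ≠ 0)
      rw [h00]
      have h01 : ((1:ℝ) - 0) ^ p = 1 := by norm_num [Real.one_rpow]
      rw [h01]
      simp only [hα] at *
      nlinarith [this]
    rcases le_total t u with h | h
    · exact convex_bound hcf.continuousOn
        (fun x hx => hd x ⟨hx.1, lt_trans hx.2 hu1⟩)
        (hmono.mono Ioo_subset_Icc_self)
        hf0le (hconc u ⟨le_rfl, hu1.le⟩) ⟨ht0, h⟩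
    · exact hconc t ⟨h, ht1⟩

private lemma key_ab {p q a b : ℝ} (hp : 1 < p) (hp2 : p ≠ 2) (hq : 1 < q)
    (hend1 : 2 < p → 1 ≤ p * (q / (1 + q)) ^ (p - 1))
    (hend2 : p < 2 → p * (q / (1 + q)) ^ (p - 1) * q ≤ q ^ p)
    (ha : 0 ≤ a) (hb : 0 ≤ b) :
    b ^ p - q ^ p * a ^ p ≤
      p * (q / (1 + q)) ^ (p - 1) * ((b - q * a) * (a + b) ^ (p - 1)) := by
  have hp0 : p ≠ 0 := by linarith
  rcases eq_or_lt_of_le (add_nonneg ha hb) with h0 | hs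
  · have ha0 : a = 0 := by linarith
    have hb0 : b = 0 := by linarith
    simp [ha0, hb0, Real.zero_rpow hp0]
  · set s : ℝ := a + b with hsdef
    set t : ℝ := a / s with htdef
    have ht0 : 0 ≤ t := div_nonneg ha hs.le
    have ht1 : t ≤ 1 := by
      rw [htdef, div_le_one hs]; linarith
    have ha' : a = s * t := by
      rw [htdef]; field_simp
    have hb' : b = s * (1 - t) := by
      rw [htdef]; field_simp; ring
    have h1t : 0 ≤ 1 - t := by linarith
    have key := G_nonpos hp hp2 hq hend1 hend2 ht0 ht1
    have hsp : (0:ℝ) < s ^ p := Real.rpow_pos_of_pos hs p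
    have H := mul_le_mul_of_nonneg_left key hsp.le
    have e1 : b ^ p = s ^ p * (1 - t) ^ p := by
      rw [hb', Real.mul_rpow hs.le h1t]
    have e2 : a ^ p = s ^ p * t ^ p := by
      rw [ha', Real.mul_rpow hs.le ht0]
    have e3 : (a + b) ^ (p - 1) = s ^ (p - 1) := by rw [← hsdef]
    have e4 : s * s ^ (p - 1) = s ^ p := by
      rw [mul_comm, ← Real.rpow_add_one hs.ne' (p - 1)]; norm_num
    calc b ^ p - q ^ p * a ^ p
        = s ^ p * ((1 - t) ^ p - q ^ p * t ^ p) := by rw [e1, e2]; ring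
      _ ≤ s ^ p * (p * (q / (1 + q)) ^ (p - 1) * (1 - (1 + q) * t)) := H
      _ = p * (q / (1 + q)) ^ (p - 1) * ((b - q * a) * (a + b) ^ (p - 1)) := by
          rw [e3, hb', ha', ← e4]; ring

/-- Burkholder's majorization `V ≤ U` on a real inner product space. -/
theorem burkholder_V_le_U (H : Type*) [NormedAddCommGroup H] [InnerProductSpace ℝ H]
    (p : ℝ) (hp : 1 < p) (x y : H) :
    ‖y‖ ^ p - (max p (p / (p - 1)) - 1) ^ p * ‖x‖ ^ p ≤
      (p * (1 - 1 / max p (p / (p - 1))) ^ (p - 1)) *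
        ((‖y‖ - (max p (p / (p - 1)) - 1) * ‖x‖) * (‖x‖ + ‖y‖) ^ (p - 1)) := by
  have hp1 : (0:ℝ) < p - 1 := by linarith
  rcases eq_or_ne p 2 with hp2 | hp2
  · subst hp2
    have hmax : max (2:ℝ) (2 / (2 - 1)) = 2 := by norm_num
    rw [hmax]
    norm_num
    nlinarith [sq_nonneg (‖x‖ + ‖y‖)]
  · -- p ≠ 2
    set m : ℝ := max p (p / (p - 1)) with hm
    have hq : 1 < m - 1 := by
      rcases lt_or_gt_of_ne hp2 with h | h
      · have : 2 < p / (p - 1) := by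
          rw [lt_div_iff₀ hp1]; nlinarith
        have : 2 < m := lt_of_lt_of_le this (le_max_right _ _)
        linarith
      · have : 2 < m := lt_of_lt_of_le h (le_max_left _ _)
        linarith
    set q : ℝ := m - 1 with hqdef
    have hm0 : (0:ℝ) < m := by linarith
    have hmq : m = 1 + q := by rw [hqdef]; ring
    have hbase : 1 - 1 / m = q / (1 + q) := by
      rw [← hmq, hqdef]; field_simp
    rw [hbase]
    apply key_ab hp hp2 hq _ _ (norm_nonneg x) (norm_nonneg y)
    · -- 2 < p → 1 ≤ α ; here m = p, q = p - 1
      intro hpgt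
      have hmp : m = p := by
        rw [hm, max_eq_left]
        rw [div_le_iff₀ hp1]; nlinarith
      have hqp : q = p - 1 := by rw [hqdef, hmp]
      have hb : (1:ℝ) + (-1/p) = (p-1)/p := by field_simp; ring
      have hber := one_add_mul_self_le_rpow_one_add
        (show (-1:ℝ) ≤ -1/p by
          rw [neg_div]; simp only [neg_le_neg_iff]
          rw [div_le_one (by linarith)]; linarith)
        (show (1:ℝ) ≤ p - 1 by linarith)
      rw [hb] at hber
      have hval : 1 + (p - 1) * (-1 / p) = 1 / p := by field_simp; ring
      rw [hval] at hber
      have hqq : q / (1 + q) = (p - 1) / p := by rw [hqp, show (1:ℝ) + (p-1) = p by ring]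
      rw [hqq]
      calc (1:ℝ) = p * (1 / p) := by field_simp
        _ ≤ p * ((p - 1) / p) ^ (p - 1) := by
            apply mul_le_mul_of_nonneg_left hber (by linarith)
    · -- p < 2 → α * q ≤ q ^ p ; here m = p/(p-1), q = 1/(p-1)
      intro hplt
      have hmp : m = p / (p - 1) := by
        rw [hm, max_eq_right]
        rw [le_div_iff₀ hp1]; nlinarith
      have hqp : q = 1 / (p - 1) := by
        rw [hqdef, hmp]; field_simp; ring
      have hqq : q / (1 + q) = 1 / p := by
        rw [hqp]; field_simp; ring
      rw [hqq, hqp]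
      -- goal : p * (1/p)^(p-1) * (1/(p-1)) ≤ (1/(p-1))^p
      have hs0 : (0:ℝ) < p - 1 := hp1
      have hp0' : (0:ℝ) < p := by linarith
      have hAM := Real.geom_mean_le_arith_mean2_weighted
        hs0.le (show (0:ℝ) ≤ 2 - p by linarith) hs0.le hp0'.le
        (show (p - 1) + (2 - p) = 1 by ring)
      -- hAM : (p-1)^(p-1) * p^(2-p) ≤ (p-1)*(p-1) + (2-p)*p
      have hsum : (p - 1) * (p - 1) + (2 - p) * p = 1 := by ring
      rw [hsum] at hAM
      have hApos : (0:ℝ) < p ^ (p - 1) := Real.rpow_pos_of_pos hp0' _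
      have hBpos : (0:ℝ) < (p - 1) ^ (p - 1) := Real.rpow_pos_of_pos hs0 _
      have he : p ^ (2 - p) * p ^ (p - 1) = p := by
        rw [← Real.rpow_add hp0', show (2 - p) + (p - 1) = (1:ℝ) by ring, Real.rpow_one]
      have hkey : (p - 1) ^ (p - 1) * p ≤ p ^ (p - 1) := by
        have h2 := mul_le_mul_of_nonneg_right hAM hApos.le
        rw [mul_assoc, he, one_mul] at h2
        exact h2
      have e1 : (1 / p) ^ (p - 1) = 1 / p ^ (p - 1) := by
        rw [Real.div_rpow zero_le_one hp0'.le, Real.one_rpow]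
      have e2 : (1 / (p - 1)) ^ p = 1 / ((p - 1) ^ (p - 1) * (p - 1)) := by
        rw [Real.div_rpow zero_le_one hs0.le, Real.one_rpow,
          ← Real.rpow_add_one hs0.ne' (p - 1)]
        norm_num
      rw [e1, e2]
      have e3 : p * (1 / p ^ (p - 1)) * (1 / (p - 1)) = p / (p ^ (p - 1) * (p - 1)) := by
        rw [mul_one_div, mul_one_div, div_div]
      rw [e3, div_le_div_iff₀ (by positivity) (by positivity)]
      nlinarith [mul_le_mul_of_nonneg_right hkey hs0.le]
end

section
/- The quantity |Γ(2 - 2iγ)| / |Γ(1 - iγ)| equals (2/√π) |Γ(3/2 - iγ)| for every real γ, and this quantity is ≤ 1 for all γ ∈ ℝ, with equality if and only if γ = 0. -/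
open Real Complex

lemma cosh_key : ∀ x : ℝ, x ≠ 0 → 1 + 4 * x ^ 2 < Real.cosh (π * x) := by
  intro x hx
  have h2m : Real.cosh (π * x) = Real.cosh (π * x / 2) ^ 2 + Real.sinh (π * x / 2) ^ 2 := by
    have h := Real.cosh_two_mul (π * x / 2)
    rw [show 2 * (π * x / 2) = π * x by ring] at h
    exact h
  have hcs := Real.cosh_sq (π * x / 2)
  have hyne : π * x / 2 ≠ 0 := div_ne_zero (mul_ne_zero Real.pi_ne_zero hx) two_ne_zero
  have hsq : (π * x / 2) ^ 2 < Real.sinh (π * x / 2) ^ 2 := by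
    rcases hyne.lt_or_gt with h | h
    · have h1 : -(π * x / 2) < Real.sinh (-(π * x / 2)) :=
        Real.self_lt_sinh_iff.mpr (by linarith)
      rw [Real.sinh_neg] at h1
      nlinarith
    · have h1 : π * x / 2 < Real.sinh (π * x / 2) := Real.self_lt_sinh_iff.mpr h
      nlinarith
  have hpi3 : (3:ℝ) < π := Real.pi_gt_three
  have hx2 : 0 < x ^ 2 := by positivity
  have hp2 : (8:ℝ) < π ^ 2 := by nlinarith
  nlinarith [hsq, mul_lt_mul_of_pos_right hp2 hx2]

theorem gamma_ratio (γ : ℝ) :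
    ‖Complex.Gamma (2 - 2 * γ * Complex.I)‖ /
        ‖Complex.Gamma (1 - γ * Complex.I)‖
      = (2 / Real.sqrt π) * ‖Complex.Gamma (3 / 2 - γ * Complex.I)‖ ∧
    ‖Complex.Gamma (2 - 2 * γ * Complex.I)‖ /
        ‖Complex.Gamma (1 - γ * Complex.I)‖ ≤ 1 ∧
    (‖Complex.Gamma (2 - 2 * γ * Complex.I)‖ /
        ‖Complex.Gamma (1 - γ * Complex.I)‖ = 1 ↔ γ = 0) := by
  have hπ : (0:ℝ) < π := Real.pi_pos
  have hsqπ : (0:ℝ) < Real.sqrt π := Real.sqrt_pos.mpr hπ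
  have hsqne : Real.sqrt π ≠ 0 := ne_of_gt hsqπ
  set s : ℂ := 1 - γ * Complex.I with hs
  have hGs : Complex.Gamma s ≠ 0 := by
    apply Complex.Gamma_ne_zero_of_re_pos
    simp [hs]
  set GS : ℝ := ‖Complex.Gamma s‖ with hGS
  set G2 : ℝ := ‖Complex.Gamma (2 - 2 * γ * Complex.I)‖ with hG2
  set A : ℝ := ‖Complex.Gamma (3 / 2 - γ * Complex.I)‖ with hA
  have hGs' : GS ≠ 0 := by simpa [hGS] using hGs
  have hGSpos : 0 ≤ GS := norm_nonneg _
  have hG2pos : 0 ≤ G2 := norm_nonneg _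
  have hApos' : 0 ≤ A := norm_nonneg _
  -- Part 1 : duplication formula
  have hdup := Complex.Gamma_mul_Gamma_add_half s
  have h2s : 2 * s = 2 - 2 * γ * Complex.I := by rw [hs]; ring
  have hsh : s + 1 / 2 = 3 / 2 - γ * Complex.I := by rw [hs]; ring
  rw [h2s, hsh] at hdup
  have habs := congrArg (‖·‖) hdup
  rw [norm_mul, norm_mul, norm_mul] at habs
  have hcp : ‖(2:ℂ) ^ ((1:ℂ) - (2 - 2 * γ * Complex.I))‖ = 1 / 2 := by
    have h := Complex.norm_cpow_eq_rpow_re_of_pos (show (0:ℝ) < 2 by norm_num)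
      ((1:ℂ) - (2 - 2 * γ * Complex.I))
    have hre : ((1:ℂ) - (2 - 2 * γ * Complex.I)).re = -1 := by
      simp
      norm_num
    rw [hre] at h
    push_cast at h
    rw [h, Real.rpow_neg_one]
    norm_num
  rw [hcp, Complex.norm_of_nonneg hsqπ.le, ← hGS, ← hG2, ← hA] at habs
  -- habs : GS * A = G2 * (1/2) * √π
  have part1 : G2 / GS = (2 / Real.sqrt π) * A := by
    field_simp
    nlinarith [habs]
  -- squared formula
  have hz : (1 / 2 - γ * Complex.I : ℂ) ≠ 0 := by
    intro h
    have := congrArg Complex.re h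
    simp at this
  set B : ℝ := ‖Complex.Gamma (1 / 2 - γ * Complex.I)‖ with hB
  set C : ℝ := ‖(1 / 2 - γ * Complex.I : ℂ)‖ with hCdef
  have hAB : A = C * B := by
    rw [hA, show (3 / 2 - γ * Complex.I : ℂ) = (1 / 2 - γ * Complex.I) + 1 by ring,
      Complex.Gamma_add_one _ hz, norm_mul, hB, hCdef]
  have hC : C ^ 2 = 1 / 4 + γ ^ 2 := by
    rw [hCdef, Complex.sq_norm, Complex.normSq_apply]
    simp
    ring
  have hcoshpos : (0:ℝ) < Real.cosh (π * γ) := Real.cosh_pos (π * γ)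
  have hBsq : B ^ 2 = π / Real.cosh (π * γ) := by
    have hrefl := Complex.Gamma_mul_Gamma_one_sub (1 / 2 - γ * Complex.I)
    have hconj : (1:ℂ) - (1 / 2 - γ * Complex.I) = starRingEnd ℂ (1 / 2 - γ * Complex.I) := by
      simp [Complex.ext_iff]
      norm_num
    rw [hconj, Complex.Gamma_conj, Complex.mul_conj] at hrefl
    have hsin : Complex.sin (π * (1 / 2 - γ * Complex.I)) = (Real.cosh (π * γ) : ℂ) := by
      rw [show (π : ℂ) * (1 / 2 - γ * Complex.I) = π / 2 - ((π * γ : ℝ) : ℂ) * Complex.I by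
        push_cast; ring, Complex.sin_pi_div_two_sub, Complex.cos_mul_I, Complex.ofReal_cosh]
    rw [hsin] at hrefl
    have h3 : Complex.normSq (Complex.Gamma (1 / 2 - γ * Complex.I))
        = π / Real.cosh (π * γ) := by
      have h2 : (Complex.normSq (Complex.Gamma (1 / 2 - γ * Complex.I)) : ℂ)
          = ((π / Real.cosh (π * γ) : ℝ) : ℂ) := by
        rw [hrefl]; push_cast; ring
      exact_mod_cast h2
    rw [hB, Complex.sq_norm]
    exact h3
  have hsqsq : Real.sqrt π ^ 2 = π := Real.sq_sqrt hπ.le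
  have hr2 : ((2 / Real.sqrt π) * A) ^ 2 = (1 + 4 * γ ^ 2) / Real.cosh (π * γ) := by
    have hstep : ((2 / Real.sqrt π) * (C * B)) ^ 2 = 4 * (C ^ 2 * B ^ 2) / Real.sqrt π ^ 2 := by
      ring
    rw [hAB, hstep, hsqsq, hC, hBsq]
    field_simp
  have key := cosh_key
  have hle : 1 + 4 * γ ^ 2 ≤ Real.cosh (π * γ) := by
    rcases eq_or_ne γ 0 with rfl | hx
    · simp
    · exact (key γ hx).le
  have hApos : 0 ≤ (2 / Real.sqrt π) * A := by positivity
  refine ⟨part1, ?_, ?_⟩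
  · rw [part1]
    nlinarith [hr2, div_le_one_of_le₀ hle hcoshpos.le]
  · rw [part1]
    constructor
    · intro h
      by_contra hx
      have h1 : (1 + 4 * γ ^ 2) / Real.cosh (π * γ) < 1 := by
        rw [div_lt_one hcoshpos]; exact key γ hx
      rw [h] at hr2
      norm_num at hr2
      nlinarith
    · intro h
      subst h
      have hone : ((2 / Real.sqrt π) * A) ^ 2 = 1 := by
        rw [hr2]; norm_num
      have hfac : ((2 / Real.sqrt π) * A - 1) * ((2 / Real.sqrt π) * A + 1) = 0 := by
        linear_combination hone
      rcases mul_eq_zero.mp hfac with h | h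
      · linarith
      · linarith
end

section
/- Let 𝓑 be the 2×2 complex matrix with rows (1, -i) and (-i, -1). Then the operator norm of 𝓑 acting on ℂ² (with the standard Hermitian norm) equals 2, while the operator norm of 𝓑 restricted to real vectors, i.e. sup{‖𝓑x‖ : x ∈ ℝ², ‖x‖ ≤ 1}, equals √2. -/
open Real Complex

lemma key (v : Fin 2 → ℂ) :
    ‖(WithLp.equiv 2 (Fin 2 → ℂ)).symm ((!![1, -Complex.I; -Complex.I, -1]).mulVec v)‖
      = Real.sqrt 2 * ‖v 0 - Complex.I * v 1‖ := by
  rw [EuclideanSpace.norm_eq, Fin.sum_univ_two]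
  have h0 : (!![1, -Complex.I; -Complex.I, -1]).mulVec v 0 = v 0 - Complex.I * v 1 := by
    simp [Matrix.mulVec, dotProduct, Fin.sum_univ_two]; ring
  have h1 : (!![1, -Complex.I; -Complex.I, -1]).mulVec v 1
      = -Complex.I * (v 0 - Complex.I * v 1) := by
    simp [Matrix.mulVec, dotProduct, Fin.sum_univ_two]
    linear_combination (-(v 1)) * Complex.I_sq
  simp only [WithLp.equiv_symm_apply, WithLp.ofLp_toLp, h0, h1]
  rw [norm_mul]
  simp only [norm_neg, Complex.norm_I, one_mul]
  rw [show ‖v 0 - Complex.I * v 1‖ ^ 2 + ‖v 0 - Complex.I * v 1‖ ^ 2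
      = 2 * ‖v 0 - Complex.I * v 1‖ ^ 2 by ring,
    Real.sqrt_mul (by norm_num), Real.sqrt_sq (norm_nonneg _)]

lemma keyR (x : EuclideanSpace ℝ (Fin 2)) :
    ‖(x 0 : ℂ) - Complex.I * x 1‖ = ‖x‖ := by
  rw [Complex.norm_def, Complex.normSq_apply, EuclideanSpace.norm_eq,
    Fin.sum_univ_two]
  simp [Real.norm_eq_abs, sq_abs, sq]

theorem beurling_matrix_norms :
    let B : Matrix (Fin 2) (Fin 2) ℂ := !![1, -Complex.I; -Complex.I, -1]
    ‖Matrix.toEuclideanCLM (𝕜 := ℂ) B‖ = 2 ∧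
    sSup {r : ℝ | ∃ x : EuclideanSpace ℝ (Fin 2), ‖x‖ ≤ 1 ∧
        r = ‖(WithLp.equiv 2 (Fin 2 → ℂ)).symm (B.mulVec (fun i => (x i : ℂ)))‖}
      = Real.sqrt 2 := by
  intro B
  have happ : ∀ x : EuclideanSpace ℂ (Fin 2),
      ‖Matrix.toEuclideanCLM (𝕜 := ℂ) B x‖
        = Real.sqrt 2 * ‖x 0 - Complex.I * x 1‖ := by
    intro x
    have hx : Matrix.toEuclideanCLM (𝕜 := ℂ) B x
        = (WithLp.equiv 2 (Fin 2 → ℂ)).symm (B.mulVec (WithLp.equiv 2 (Fin 2 → ℂ) x)) := by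
      have := Matrix.ofLp_toEuclideanCLM (𝕜 := ℂ) B x
      exact rfl
    rw [hx, key]
    rfl
  constructor
  · refine le_antisymm (ContinuousLinearMap.opNorm_le_bound _ (by norm_num) fun x => ?_) ?_
    · rw [happ x]
      have hx : ‖x‖ = Real.sqrt (‖x 0‖ ^ 2 + ‖x 1‖ ^ 2) := by
        rw [EuclideanSpace.norm_eq, Fin.sum_univ_two]
      have ht : ‖x 0 - Complex.I * x 1‖ ≤ ‖x 0‖ + ‖x 1‖ := by
        calc ‖x 0 - Complex.I * x 1‖ ≤ ‖x 0‖ + ‖Complex.I * x 1‖ := norm_sub_le _ _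
          _ = ‖x 0‖ + ‖x 1‖ := by rw [norm_mul, Complex.norm_I, one_mul]
      rw [hx]
      have h2 : Real.sqrt 2 * ‖x 0 - Complex.I * x 1‖ ≤ Real.sqrt 2 * (‖x 0‖ + ‖x 1‖) :=
        mul_le_mul_of_nonneg_left ht (Real.sqrt_nonneg 2)
      refine h2.trans ?_
      rw [show Real.sqrt 2 * (‖x 0‖ + ‖x 1‖) = Real.sqrt (2 * (‖x 0‖ + ‖x 1‖)^2) by
        rw [Real.sqrt_mul (by norm_num), Real.sqrt_sq (by positivity)],
        show (2:ℝ) * Real.sqrt (‖x 0‖ ^ 2 + ‖x 1‖ ^ 2)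
          = Real.sqrt (4 * (‖x 0‖ ^ 2 + ‖x 1‖ ^ 2)) by
        rw [show (4:ℝ) * (‖x 0‖ ^ 2 + ‖x 1‖ ^ 2) = 2^2 * (‖x 0‖ ^ 2 + ‖x 1‖ ^ 2) by ring,
          Real.sqrt_mul (by positivity), Real.sqrt_sq (by norm_num)]]
      apply Real.sqrt_le_sqrt
      nlinarith [sq_nonneg (‖x 0‖ - ‖x 1‖)]
    · set y : EuclideanSpace ℂ (Fin 2) :=
        (WithLp.equiv 2 (Fin 2 → ℂ)).symm
          ![((Real.sqrt 2 / 2 : ℝ) : ℂ), ((Real.sqrt 2 / 2 : ℝ) : ℂ) * Complex.I]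
      have hy0 : y 0 = ((Real.sqrt 2 / 2 : ℝ) : ℂ) := rfl
      have hy1 : y 1 = ((Real.sqrt 2 / 2 : ℝ) : ℂ) * Complex.I := rfl
      have hsq : (Real.sqrt 2 : ℝ) ^ 2 = 2 := Real.sq_sqrt (by norm_num)
      have hnc : ‖((Real.sqrt 2 / 2 : ℝ) : ℂ)‖ = Real.sqrt 2 / 2 := by
        rw [Complex.norm_real, Real.norm_eq_abs, _root_.abs_of_nonneg (by positivity)]
      have hyn : ‖y‖ = 1 := by
        rw [EuclideanSpace.norm_eq, Fin.sum_univ_two, hy0, hy1, norm_mul, Complex.norm_I,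
          mul_one, hnc]
        rw [show (Real.sqrt 2 / 2)^2 + (Real.sqrt 2 / 2)^2 = 1 by nlinarith]
        exact Real.sqrt_one
      have hval : ‖Matrix.toEuclideanCLM (𝕜 := ℂ) B y‖ = 2 := by
        rw [happ y, hy0, hy1]
        rw [show ((Real.sqrt 2 / 2 : ℝ) : ℂ) - Complex.I * (((Real.sqrt 2 / 2 : ℝ) : ℂ) * Complex.I)
            = ((Real.sqrt 2 : ℝ) : ℂ) by
          rw [show Complex.I * (((Real.sqrt 2 / 2 : ℝ) : ℂ) * Complex.I)
              = ((Real.sqrt 2 / 2 : ℝ) : ℂ) * (Complex.I * Complex.I) by ring, Complex.I_mul_I]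
          push_cast; ring]
        rw [Complex.norm_real, Real.norm_eq_abs, _root_.abs_of_nonneg (Real.sqrt_nonneg 2)]
        nlinarith
      calc (2:ℝ) = ‖Matrix.toEuclideanCLM (𝕜 := ℂ) B y‖ := hval.symm
        _ ≤ ‖Matrix.toEuclideanCLM (𝕜 := ℂ) B‖ * ‖y‖ := ContinuousLinearMap.le_opNorm _ _
        _ = ‖Matrix.toEuclideanCLM (𝕜 := ℂ) B‖ := by rw [hyn, mul_one]
  · have hset : ∀ x : EuclideanSpace ℝ (Fin 2),
        ‖(WithLp.equiv 2 (Fin 2 → ℂ)).symm (B.mulVec (fun i => (x i : ℂ)))‖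
          = Real.sqrt 2 * ‖x‖ := by
      intro x
      rw [key, keyR]
    have hub : ∀ r ∈ {r : ℝ | ∃ x : EuclideanSpace ℝ (Fin 2), ‖x‖ ≤ 1 ∧
        r = ‖(WithLp.equiv 2 (Fin 2 → ℂ)).symm (B.mulVec (fun i => (x i : ℂ)))‖},
        r ≤ Real.sqrt 2 := by
      rintro r ⟨x, hx, rfl⟩
      rw [hset]
      calc Real.sqrt 2 * ‖x‖ ≤ Real.sqrt 2 * 1 :=
            mul_le_mul_of_nonneg_left hx (Real.sqrt_nonneg 2)
        _ = Real.sqrt 2 := mul_one _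
    apply le_antisymm
    · exact csSup_le ⟨_, 0, by simp, rfl⟩ hub
    · apply le_csSup ⟨Real.sqrt 2, hub⟩
      refine ⟨EuclideanSpace.single (0 : Fin 2) (1 : ℝ), ?_, ?_⟩
      · rw [EuclideanSpace.norm_single]; norm_num
      · rw [hset, EuclideanSpace.norm_single]; norm_num
end

section
/- Let 𝓑 = [[1, -i], [-i, -1]] and K = [[0, -1], [1, 0]] as 2×2 complex matrices. Then inf over α ∈ ℂ of the operator norm ‖𝓑 + αK‖ (on ℂ²) equals ‖𝓑‖ = 2. -/
open Real Complex

lemma clm_apply' (M : Matrix (Fin 2) (Fin 2) ℂ) (x : EuclideanSpace ℂ (Fin 2)) (i : Fin 2) :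
    Matrix.toEuclideanCLM (𝕜 := ℂ) M x i = M.mulVec (fun j => x j) i := by
  have := Matrix.ofLp_toEuclideanCLM (𝕜 := ℂ) M x
  have h0 := congrFun this i
  simpa using h0

lemma key_norm' (M : Matrix (Fin 2) (Fin 2) ℂ) (x : EuclideanSpace ℂ (Fin 2)) :
    ‖Matrix.toEuclideanCLM (𝕜 := ℂ) M x‖ =
      Real.sqrt (‖M 0 0 * x 0 + M 0 1 * x 1‖ ^ 2 + ‖M 1 0 * x 0 + M 1 1 * x 1‖ ^ 2) := by
  rw [EuclideanSpace.norm_eq, Fin.sum_univ_two, clm_apply', clm_apply']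
  simp [Matrix.mulVec, dotProduct, Fin.sum_univ_two]

lemma x_norm' (x : EuclideanSpace ℂ (Fin 2)) :
    ‖x‖ = Real.sqrt (‖x 0‖ ^ 2 + ‖x 1‖ ^ 2) := by
  rw [EuclideanSpace.norm_eq, Fin.sum_univ_two]

lemma normB_le' : ‖Matrix.toEuclideanCLM (𝕜 := ℂ) !![1, -Complex.I; -Complex.I, -1]‖ ≤ 2 := by
  apply ContinuousLinearMap.opNorm_le_bound _ (by norm_num)
  intro x
  rw [key_norm', x_norm']
  set a := x 0
  set b := x 1
  have h1 : ‖(-Complex.I : ℂ) * a + (-1 : ℂ) * b‖ = ‖(1:ℂ) * a + (-Complex.I) * b‖ := by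
    have : (-Complex.I : ℂ) * a + (-1 : ℂ) * b = (-Complex.I) * ((1:ℂ) * a + (-Complex.I) * b) := by
      ring_nf
      simp [Complex.I_sq]
      ring
    rw [this, norm_mul]
    simp
  simp only [Fin.isValue, Matrix.of_apply, Matrix.cons_val', Matrix.cons_val_zero,
    Matrix.empty_val', Matrix.cons_val_fin_one, Matrix.cons_val_one, Matrix.head_fin_const,
    Matrix.head_cons]
  rw [h1]
  have h2 : ‖(1:ℂ) * a + (-Complex.I) * b‖ ≤ ‖a‖ + ‖b‖ := by
    calc ‖(1:ℂ) * a + (-Complex.I) * b‖ ≤ ‖(1:ℂ) * a‖ + ‖(-Complex.I) * b‖ := norm_add_le _ _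
    _ = ‖a‖ + ‖b‖ := by simp
  have ha : 0 ≤ ‖a‖ := norm_nonneg _
  have hb : 0 ≤ ‖b‖ := norm_nonneg _
  have h3 : ‖(1:ℂ) * a + (-Complex.I) * b‖ ^ 2 + ‖(1:ℂ) * a + (-Complex.I) * b‖ ^ 2
      ≤ 4 * (‖a‖ ^ 2 + ‖b‖ ^ 2) := by
    have h4 := mul_le_mul h2 h2 (norm_nonneg _) (by positivity)
    nlinarith [sq_nonneg (‖a‖ - ‖b‖)]
  calc Real.sqrt (‖(1:ℂ) * a + (-Complex.I) * b‖ ^ 2 + ‖(1:ℂ) * a + (-Complex.I) * b‖ ^ 2)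
      ≤ Real.sqrt (4 * (‖a‖ ^ 2 + ‖b‖ ^ 2)) := Real.sqrt_le_sqrt h3
    _ = 2 * Real.sqrt (‖a‖ ^ 2 + ‖b‖ ^ 2) := by
        rw [show (4 : ℝ) * (‖a‖ ^ 2 + ‖b‖ ^ 2) = 2^2 * (‖a‖ ^ 2 + ‖b‖ ^ 2) by ring,
          Real.sqrt_mul (by positivity), Real.sqrt_sq (by norm_num)]

lemma norm_lower' (α : ℂ) :
    2 ≤ ‖Matrix.toEuclideanCLM (n := Fin 2) (𝕜 := ℂ)
      ((!![1, -Complex.I; -Complex.I, -1] : Matrix (Fin 2) (Fin 2) ℂ) + α • !![0, -1; 1, 0])‖ := by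
  set M : Matrix (Fin 2) (Fin 2) ℂ :=
    (!![1, -Complex.I; -Complex.I, -1] : Matrix (Fin 2) (Fin 2) ℂ) + α • !![0, -1; 1, 0] with hM
  set v : EuclideanSpace ℂ (Fin 2) := (WithLp.equiv 2 (Fin 2 → ℂ)).symm ![1, Complex.I] with hv
  have hv0 : v 0 = 1 := rfl
  have hv1 : v 1 = Complex.I := rfl
  have hvnorm : ‖v‖ = Real.sqrt 2 := by
    rw [x_norm', hv0, hv1]; norm_num
  have h00 : M 0 0 = 1 := by simp [hM]
  have h01 : M 0 1 = -Complex.I - α := by simp [hM]; ring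
  have h10 : M 1 0 = -Complex.I + α := by simp [hM]
  have h11 : M 1 1 = -1 := by simp [hM]
  have key := key_norm' M v
  rw [h00, h01, h10, h11, hv0, hv1] at key
  have e1 : (1:ℂ) * 1 + (-Complex.I - α) * Complex.I = 2 - α * Complex.I := by
    linear_combination -Complex.I_sq
  have e2 : (-Complex.I + α) * 1 + (-1:ℂ) * Complex.I = α - 2 * Complex.I := by ring
  rw [e1, e2] at key
  have hsum : (8:ℝ) ≤ ‖(2:ℂ) - α * Complex.I‖ ^ 2 + ‖α - 2 * Complex.I‖ ^ 2 := by
    rw [Complex.sq_norm, Complex.sq_norm,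
      Complex.normSq_apply, Complex.normSq_apply]
    simp only [Complex.sub_re, Complex.sub_im, Complex.mul_re, Complex.mul_im,
      Complex.I_re, Complex.I_im, Complex.re_ofNat, Complex.im_ofNat]
    nlinarith [sq_nonneg α.re, sq_nonneg α.im]
  have hge : Real.sqrt 8 ≤ ‖Matrix.toEuclideanCLM (𝕜 := ℂ) M v‖ := by
    rw [key]; exact Real.sqrt_le_sqrt hsum
  have hle := ContinuousLinearMap.le_opNorm (Matrix.toEuclideanCLM (𝕜 := ℂ) M) v
  rw [hvnorm] at hle
  have h8 : Real.sqrt 8 = 2 * Real.sqrt 2 := by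
    rw [show (8:ℝ) = 2^2 * 2 by norm_num, Real.sqrt_mul (by positivity), Real.sqrt_sq (by norm_num)]
  have hs2 : 0 < Real.sqrt 2 := by positivity
  have : 2 * Real.sqrt 2 ≤ ‖Matrix.toEuclideanCLM (𝕜 := ℂ) M‖ * Real.sqrt 2 := by
    calc 2 * Real.sqrt 2 = Real.sqrt 8 := h8.symm
    _ ≤ ‖Matrix.toEuclideanCLM (𝕜 := ℂ) M v‖ := hge
    _ ≤ _ := hle
  exact le_of_mul_le_mul_right this hs2

theorem beurling_matrix_minimal_norm :
    let B : Matrix (Fin 2) (Fin 2) ℂ := !![1, -Complex.I; -Complex.I, -1]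
    let K : Matrix (Fin 2) (Fin 2) ℂ := !![0, -1; 1, 0]
    (⨅ α : ℂ, ‖Matrix.toEuclideanCLM (𝕜 := ℂ) (B + α • K)‖)
        = ‖Matrix.toEuclideanCLM (𝕜 := ℂ) B‖ ∧
    ‖Matrix.toEuclideanCLM (𝕜 := ℂ) B‖ = 2 := by
  intro B K
  have h0 : B + (0:ℂ) • K = B := by simp
  have hlow : ∀ α : ℂ, 2 ≤ ‖Matrix.toEuclideanCLM (𝕜 := ℂ) (B + α • K)‖ :=
    fun α => norm_lower' α
  have hB : ‖Matrix.toEuclideanCLM (𝕜 := ℂ) B‖ = 2 := by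
    refine le_antisymm normB_le' ?_
    have := hlow 0
    rwa [h0] at this
  refine ⟨?_, hB⟩
  have bdd : BddBelow (Set.range fun α : ℂ =>
      ‖Matrix.toEuclideanCLM (𝕜 := ℂ) (B + α • K)‖) :=
    ⟨0, by rintro x ⟨α, rfl⟩; exact norm_nonneg _⟩
  refine le_antisymm ?_ ?_
  · have := ciInf_le bdd 0
    rwa [h0] at this
  · rw [hB]
    exact le_ciInf hlow
end

section
/- For 0 < α < 2 and ξ ∈ ℝ² \ {0}, writing c_α = ∫₀^∞ (1 - cos s)/s^{1+α} ds (a finite positive constant), one has ∫_{ℝ²} (1 - cos(ξ·z)) |z|^{-2-α} dz = c_α ∫₀^{2π} |ξ·(cos t, sin t)|^α dt, and with φ(cos t, sin t) = e^{-2it}, ∫₀^{2π} |ξ·(cos t, sin t)|^α e^{-2it} dt / ∫₀^{2π} |ξ·(cos t, sin t)|^α dt = (α/(α+2)) · conj(ξ)²/|ξ|², identifying ξ ∈ ℝ² with a complex number. -/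
open Real Complex MeasureTheory intervalIntegral
open Set
open scoped ENNReal

lemma slm_meas {α : ℝ} : Measurable (fun s : ℝ => (1 - Real.cos s) / s ^ (1 + α)) :=
  (measurable_const.sub Real.measurable_cos).div (measurable_id.pow measurable_const)

lemma slm_integrable {α : ℝ} (hα0 : 0 < α) (hα2 : α < 2) :
    IntegrableOn (fun s : ℝ => (1 - Real.cos s) / s ^ (1 + α)) (Ioi 0) := by
  have h1 : IntegrableOn (fun s : ℝ => (1 - Real.cos s) / s ^ (1 + α)) (Ioc 0 1) := by
    have hbound : IntegrableOn (fun s : ℝ => s ^ (1 - α)) (Ioc 0 1) := by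
      rw [← intervalIntegrable_iff_integrableOn_Ioc_of_le zero_le_one]
      exact intervalIntegral.intervalIntegrable_rpow' (by linarith)
    refine Integrable.mono' hbound slm_meas.aestronglyMeasurable ?_
    filter_upwards [ae_restrict_mem measurableSet_Ioc] with s hs
    have hs0 : 0 < s := hs.1
    have hcos : 1 - Real.cos s ≤ s ^ 2 / 2 := by
      have := Real.one_sub_sq_div_two_le_cos (x := s); linarith
    have hcos0 : 0 ≤ 1 - Real.cos s := by have := Real.cos_le_one s; linarith
    have hpos : (0:ℝ) < s ^ (1 + α) := Real.rpow_pos_of_pos hs0 _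
    rw [Real.norm_eq_abs, _root_.abs_of_nonneg (div_nonneg hcos0 hpos.le), div_le_iff₀ hpos]
    calc 1 - Real.cos s ≤ s ^ 2 / 2 := hcos
      _ ≤ s ^ 2 := half_le_self (sq_nonneg s)
      _ = s ^ (1 - α) * s ^ (1 + α) := by
          rw [← Real.rpow_natCast s 2, ← Real.rpow_add hs0]; norm_num
  have h2 : IntegrableOn (fun s : ℝ => (1 - Real.cos s) / s ^ (1 + α)) (Ioi 1) := by
    have hbound : IntegrableOn (fun s : ℝ => 2 * s ^ (-(1 + α))) (Ioi 1) :=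
      (integrableOn_Ioi_rpow_of_lt (by linarith) one_pos).const_mul 2
    refine Integrable.mono' hbound slm_meas.aestronglyMeasurable ?_
    filter_upwards [ae_restrict_mem measurableSet_Ioi] with s hs
    have hs0 : (0:ℝ) < s := lt_trans one_pos hs
    have hpos : (0:ℝ) < s ^ (1 + α) := Real.rpow_pos_of_pos hs0 _
    have hcos0 : 0 ≤ 1 - Real.cos s := by have := Real.cos_le_one s; linarith
    have hcos : 1 - Real.cos s ≤ 2 := by have := Real.neg_one_le_cos s; linarith
    rw [Real.norm_eq_abs, _root_.abs_of_nonneg (div_nonneg hcos0 hpos.le),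
      Real.rpow_neg hs0.le, div_le_iff₀ hpos, mul_assoc, inv_mul_cancel₀ hpos.ne', mul_one]
    exact hcos
  have : Ioi (0:ℝ) = Ioc 0 1 ∪ Ioi 1 := (Set.Ioc_union_Ioi_eq_Ioi zero_le_one).symm
  rw [this]
  exact h1.union h2

lemma slm_pos {α : ℝ} (hα0 : 0 < α) (hα2 : α < 2) :
    0 < ∫ s in Ioi (0:ℝ), (1 - Real.cos s) / s ^ (1 + α) := by
  have hnn : 0 ≤ᵐ[volume.restrict (Ioi (0:ℝ))] fun s => (1 - Real.cos s) / s ^ (1 + α) := by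
    filter_upwards [ae_restrict_mem measurableSet_Ioi] with s hs
    have h1 : 0 ≤ 1 - Real.cos s := by have := Real.cos_le_one s; linarith
    exact div_nonneg h1 (Real.rpow_nonneg (le_of_lt hs) _)
  rw [setIntegral_pos_iff_support_of_nonneg_ae hnn (slm_integrable hα0 hα2)]
  have hsub : Ioo (π/2) π ⊆ (Function.support fun s => (1 - Real.cos s) / s ^ (1 + α)) ∩ Ioi 0 := by
    intro s hs
    have hs0 : (0:ℝ) < s := lt_trans (by positivity) hs.1
    refine ⟨?_, hs0⟩
    have hcos : Real.cos s < 1 := by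
      have := Real.cos_nonpos_of_pi_div_two_le_of_le hs.1.le (by linarith [hs.2, Real.pi_pos])
      linarith
    have hpos : (0:ℝ) < s ^ (1 + α) := Real.rpow_pos_of_pos hs0 _
    simp only [Function.mem_support]
    exact ne_of_gt (div_pos (by linarith) hpos)
  calc (0:ℝ≥0∞) < volume (Ioo (π/2) π) := by
        rw [Real.volume_Ioo]
        exact ENNReal.ofReal_pos.mpr (by linarith [Real.pi_pos])
    _ ≤ _ := measure_mono hsub

-- second: 1D scaling lemma
lemma slm_g_int {α : ℝ} (hα0 : 0 < α) (hα2 : α < 2) :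
    IntegrableOn (fun s : ℝ => (1 - Real.cos s) * s ^ (-(1+α))) (Ioi 0) := by
  have h : IntegrableOn (fun s : ℝ => (1 - Real.cos s) / s ^ (1 + α)) (Ioi 0) :=
    slm_integrable hα0 hα2
  refine h.congr_fun (fun s hs => ?_) measurableSet_Ioi
  beta_reduce
  rw [Real.rpow_neg (le_of_lt hs), div_eq_mul_inv]

lemma slm_scale_int {α : ℝ} (hα0 : 0 < α) (hα2 : α < 2) (c : ℝ) :
    IntegrableOn (fun r : ℝ => (1 - Real.cos (c * r)) * r ^ (-(1+α))) (Ioi 0) := by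
  rcases eq_or_ne c 0 with rfl | hc
  · simp
  · have hb : 0 < |c| := _root_.abs_pos.mpr hc
    have hcos : ∀ r : ℝ, Real.cos (c * r) = Real.cos (|c| * r) := by
      intro r
      rcases _root_.abs_cases c with ⟨h, _⟩ | ⟨h, _⟩
      · rw [h]
      · rw [h, neg_mul, Real.cos_neg]
    have key := (integrableOn_Ioi_comp_mul_left_iff
      (fun s : ℝ => (1 - Real.cos s) * s ^ (-(1+α))) 0 hb).mpr
      (by rw [mul_zero]; exact slm_g_int hα0 hα2)
    have key2 : IntegrableOn (fun r : ℝ => |c| ^ (1+α) *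
        ((1 - Real.cos (|c| * r)) * (|c| * r) ^ (-(1+α)))) (Ioi 0) := key.const_mul _
    refine key2.congr_fun (fun r hr => ?_) measurableSet_Ioi
    have hr0 : (0:ℝ) < r := hr
    beta_reduce
    rw [Real.mul_rpow hb.le hr0.le, hcos]
    rw [show |c| ^ (1+α) * ((1 - Real.cos (|c| * r)) * (|c| ^ (-(1+α)) * r ^ (-(1+α))))
      = (|c| ^ (1+α) * |c| ^ (-(1+α))) * ((1 - Real.cos (|c| * r)) * r ^ (-(1+α))) by ring,
      ← Real.rpow_add hb, add_neg_cancel, Real.rpow_zero, one_mul]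

lemma slm_scale {α : ℝ} (hα0 : 0 < α) (hα2 : α < 2) (c : ℝ) :
    ∫ r in Ioi (0:ℝ), (1 - Real.cos (c * r)) * r ^ (-(1+α))
      = (∫ s in Ioi (0:ℝ), (1 - Real.cos s) / s ^ (1 + α)) * |c| ^ α := by
  have hgcongr : ∫ s in Ioi (0:ℝ), (1 - Real.cos s) / s ^ (1 + α)
      = ∫ s in Ioi (0:ℝ), (1 - Real.cos s) * s ^ (-(1+α)) := by
    refine setIntegral_congr_fun measurableSet_Ioi (fun s hs => ?_)
    rw [Real.rpow_neg (le_of_lt hs), div_eq_mul_inv]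
  rcases eq_or_ne c 0 with rfl | hc
  · simp [Real.zero_rpow hα0.ne']
  · have hb : 0 < |c| := _root_.abs_pos.mpr hc
    have hcos : ∀ r : ℝ, Real.cos (c * r) = Real.cos (|c| * r) := by
      intro r
      rcases _root_.abs_cases c with ⟨h, _⟩ | ⟨h, _⟩
      · rw [h]
      · rw [h, neg_mul, Real.cos_neg]
    have step1 : ∫ r in Ioi (0:ℝ), (1 - Real.cos (c * r)) * r ^ (-(1+α))
        = ∫ r in Ioi (0:ℝ), |c| ^ (1+α) *
            ((1 - Real.cos (|c| * r)) * (|c| * r) ^ (-(1+α))) := by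
      refine setIntegral_congr_fun measurableSet_Ioi (fun r hr => ?_)
      have hr0 : (0:ℝ) < r := hr
      rw [Real.mul_rpow hb.le hr0.le, hcos]
      rw [show |c| ^ (1+α) * ((1 - Real.cos (|c| * r)) * (|c| ^ (-(1+α)) * r ^ (-(1+α))))
        = (|c| ^ (1+α) * |c| ^ (-(1+α))) * ((1 - Real.cos (|c| * r)) * r ^ (-(1+α))) by ring,
        ← Real.rpow_add hb, add_neg_cancel, Real.rpow_zero, one_mul]
    have hpow : |c| ^ (1+α) * |c|⁻¹ = |c| ^ α := by
      rw [show (1:ℝ)+α = α+1 by ring, Real.rpow_add hb, Real.rpow_one, mul_assoc,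
        mul_inv_cancel₀ hb.ne', mul_one]
    rw [step1, MeasureTheory.integral_const_mul,
      integral_comp_mul_left_Ioi (fun s : ℝ => (1 - Real.cos s) * s ^ (-(1+α))) 0 hb,
      mul_zero, hgcongr, smul_eq_mul, ← mul_assoc, hpow, mul_comm]

lemma slm_hasDerivAt_habs {α : ℝ} (hα0 : 0 < α) (c : ℝ) :
    HasDerivAt (fun x : ℝ => |x| ^ α * x) ((α + 1) * |c| ^ α) c := by
  rcases lt_trichotomy c 0 with hc | rfl | hc
  · have h1 : HasDerivAt (fun x : ℝ => -((-x) ^ (α + 1))) ((α + 1) * (-c) ^ α) c := by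
      have hinner : HasDerivAt (fun x : ℝ => (-x)) (-1) c := (hasDerivAt_id c).neg
      have houter : HasDerivAt (fun y : ℝ => y ^ (α + 1)) ((α + 1) * (-c) ^ (α + 1 - 1)) (-c) :=
        Real.hasDerivAt_rpow_const (Or.inl (by linarith : -c ≠ 0))
      have : HasDerivAt (fun x : ℝ => -((-x) ^ (α + 1))) (-((α + 1) * (-c) ^ (α + 1 - 1) * -1)) c :=
        (houter.comp c hinner).neg
      convert this using 1
      simp only [add_sub_cancel_right]
      ring
    refine h1.congr_of_eventuallyEq ?_ |>.congr_deriv ?_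
    · filter_upwards [eventually_lt_nhds hc] with x hx
      rw [_root_.abs_of_neg hx, Real.rpow_add_one (by linarith : -x ≠ 0) α]
      ring
    · rw [_root_.abs_of_neg hc]
  · have key : HasDerivAt (fun x : ℝ => |x| ^ α * x) 0 0 := by
      rw [hasDerivAt_iff_tendsto_slope]
      have hev : (fun x : ℝ => |x| ^ α) =ᶠ[nhdsWithin 0 {(0:ℝ)}ᶜ] slope (fun x : ℝ => |x| ^ α * x) 0 := by
        filter_upwards [self_mem_nhdsWithin] with x hx
        have hx' : (x:ℝ) ≠ 0 := hx
        simp only [slope, vsub_eq_sub, sub_zero, abs_zero, Real.zero_rpow hα0.ne', zero_mul]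
        rw [smul_eq_mul]; field_simp
      refine Filter.Tendsto.congr' hev ?_
      have hcont : Continuous (fun x : ℝ => |x| ^ α) :=
        continuous_abs.rpow_const (fun x => Or.inr hα0.le)
      have := (hcont.tendsto 0).mono_left (nhdsWithin_le_nhds (s := {(0:ℝ)}ᶜ))
      simpa [Real.zero_rpow hα0.ne'] using this
    simpa [Real.zero_rpow hα0.ne'] using key
  · have h1 : HasDerivAt (fun x : ℝ => x ^ (α + 1)) ((α + 1) * c ^ α) c := by
      have := Real.hasDerivAt_rpow_const (p := α + 1) (Or.inl hc.ne')
      simpa [add_sub_cancel_right] using this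
    refine h1.congr_of_eventuallyEq ?_ |>.congr_deriv ?_
    · filter_upwards [eventually_gt_nhds hc] with x hx
      rw [_root_.abs_of_pos hx, Real.rpow_add_one hx.ne' α]
    · rw [_root_.abs_of_pos hc]

lemma slm_hasDerivAt_g {α : ℝ} (hα0 : 0 < α) (s : ℝ) :
    HasDerivAt (fun t : ℝ => |Real.cos t| ^ α * Real.cos t * Real.sin t)
      ((α + 2) * (|Real.cos s| ^ α * Real.cos s ^ 2) - (α + 1) * |Real.cos s| ^ α) s := by
  have hcos : HasDerivAt Real.cos (-Real.sin s) s := Real.hasDerivAt_cos s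
  have hsin : HasDerivAt Real.sin (Real.cos s) s := Real.hasDerivAt_sin s
  have hcomp : HasDerivAt (fun t : ℝ => |Real.cos t| ^ α * Real.cos t)
      ((α + 1) * |Real.cos s| ^ α * (-Real.sin s)) s :=
    (slm_hasDerivAt_habs hα0 (Real.cos s)).comp s hcos
  have : HasDerivAt (fun t : ℝ => |Real.cos t| ^ α * Real.cos t * Real.sin t)
      ((α + 1) * |Real.cos s| ^ α * (-Real.sin s) * Real.sin s
        + |Real.cos s| ^ α * Real.cos s * Real.cos s) s := hcomp.mul hsin
  convert this using 1
  have hsq : Real.sin s ^ 2 = 1 - Real.cos s ^ 2 := by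
    have := Real.sin_sq_add_cos_sq s; linarith
  linear_combination ((α + 1) * |Real.cos s| ^ α) * hsq

lemma slm_cont_acos {α : ℝ} (hα0 : 0 < α) : Continuous (fun s : ℝ => |Real.cos s| ^ α) :=
  (continuous_abs.comp Real.continuous_cos).rpow_const (fun x => Or.inr hα0.le)

lemma slm_I_pos {α : ℝ} (hα0 : 0 < α) :
    0 < ∫ s in (0:ℝ)..(2*π), |Real.cos s| ^ α := by
  have h2π : (0:ℝ) ≤ 2*π := by positivity
  rw [integral_of_le h2π]
  have hnn : 0 ≤ᵐ[volume.restrict (Ioc (0:ℝ) (2*π))] fun s => |Real.cos s| ^ α :=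
    Filter.Eventually.of_forall (fun s => Real.rpow_nonneg (_root_.abs_nonneg _) _)
  rw [setIntegral_pos_iff_support_of_nonneg_ae hnn
    ((slm_cont_acos hα0).integrableOn_Ioc)]
  have hsub : Ioo (0:ℝ) (π/2) ⊆ (Function.support fun s => |Real.cos s| ^ α) ∩ Ioc 0 (2*π) := by
    intro s hs
    have hπ := Real.pi_pos
    have hcos : 0 < Real.cos s := Real.cos_pos_of_mem_Ioo ⟨by linarith [hs.1], hs.2⟩
    refine ⟨?_, hs.1, by linarith [hs.2]⟩
    simp only [Function.mem_support]
    exact ne_of_gt (Real.rpow_pos_of_pos (_root_.abs_pos.mpr hcos.ne') _)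
  calc (0:ℝ≥0∞) < volume (Ioo (0:ℝ) (π/2)) := by
        rw [Real.volume_Ioo]; exact ENNReal.ofReal_pos.mpr (by linarith [Real.pi_pos])
    _ ≤ _ := measure_mono hsub

lemma slm_C2_eq {α : ℝ} (hα0 : 0 < α) :
    (α + 2) * ∫ s in (0:ℝ)..(2*π), |Real.cos s| ^ α * Real.cos s ^ 2
      = (α + 1) * ∫ s in (0:ℝ)..(2*π), |Real.cos s| ^ α := by
  have hcont1 : Continuous (fun s : ℝ => |Real.cos s| ^ α * Real.cos s ^ 2) :=
    (slm_cont_acos hα0).mul (Real.continuous_cos.pow 2)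
  have hcont : Continuous (fun s : ℝ =>
      (α + 2) * (|Real.cos s| ^ α * Real.cos s ^ 2) - (α + 1) * |Real.cos s| ^ α) :=
    (continuous_const.mul hcont1).sub (continuous_const.mul (slm_cont_acos hα0))
  have hftc := intervalIntegral.integral_eq_sub_of_hasDerivAt
    (f := fun t : ℝ => |Real.cos t| ^ α * Real.cos t * Real.sin t)
    (fun s _ => slm_hasDerivAt_g hα0 s) (hcont.intervalIntegrable 0 (2*π))
  simp only [Real.sin_two_pi, Real.sin_zero, mul_zero, sub_zero] at hftc
  rw [intervalIntegral.integral_sub (Continuous.intervalIntegrable (u := fun s : ℝ =>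
      (α + 2) * (|Real.cos s| ^ α * Real.cos s ^ 2)) (continuous_const.mul hcont1) _ _)
    (Continuous.intervalIntegrable (u := fun s : ℝ =>
      (α + 1) * |Real.cos s| ^ α) (continuous_const.mul (slm_cont_acos hα0)) _ _),
    intervalIntegral.integral_const_mul, intervalIntegral.integral_const_mul] at hftc
  linarith [hftc]

lemma slm_Jc {α : ℝ} (hα0 : 0 < α) :
    ∫ s in (0:ℝ)..(2*π), |Real.cos s| ^ α * Real.cos (2*s)
      = α / (α + 2) * ∫ s in (0:ℝ)..(2*π), |Real.cos s| ^ α := by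
  have hcont1 : Continuous (fun s : ℝ => |Real.cos s| ^ α * Real.cos s ^ 2) :=
    (slm_cont_acos hα0).mul (Real.continuous_cos.pow 2)
  have step : ∫ s in (0:ℝ)..(2*π), |Real.cos s| ^ α * Real.cos (2*s)
      = 2 * (∫ s in (0:ℝ)..(2*π), |Real.cos s| ^ α * Real.cos s ^ 2)
        - ∫ s in (0:ℝ)..(2*π), |Real.cos s| ^ α := by
    rw [← intervalIntegral.integral_const_mul, ← intervalIntegral.integral_sub
      (Continuous.intervalIntegrable (u := fun s : ℝ =>
        2 * (|Real.cos s| ^ α * Real.cos s ^ 2)) (continuous_const.mul hcont1) _ _)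
      ((slm_cont_acos hα0).intervalIntegrable _ _)]
    refine intervalIntegral.integral_congr (fun s _ => ?_)
    rw [Real.cos_two_mul]; ring
  have h2 := slm_C2_eq hα0
  have hne : α + 2 ≠ 0 := by linarith
  rw [step]
  field_simp
  linarith [h2]

lemma slm_Js {α : ℝ} (hα0 : 0 < α) :
    ∫ s in (0:ℝ)..(2*π), |Real.cos s| ^ α * Real.sin (2*s) = 0 := by
  set f : ℝ → ℝ := fun s => |Real.cos s| ^ α * Real.sin (2*s) with hf
  have hper : Function.Periodic f (2*π) := by
    intro s
    simp only [hf]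
    rw [Real.cos_add_two_pi, show 2*(s+2*π) = 2*s + 2*(2*π) by ring]
    rw [show 2*s + 2*(2*π) = 2*s + 4*π by ring]
    congr 1
    rw [show (2:ℝ)*s + 4*π = 2*s + 2*(2*π) by ring]
    exact (Real.sin_periodic.nat_mul 2 (2*s) ▸ by
      simpa [two_mul, add_assoc] using (Real.sin_periodic.add_nat_mul_eq (n := 2) (x := 2*s)))
  have hshift := hper.intervalIntegral_add_eq 0 (-π)
  rw [zero_add, show -π + 2*π = π by ring] at hshift
  have hodd : ∀ s, f (-s) = -f s := by
    intro s
    simp only [hf, Real.cos_neg, show 2*(-s) = -(2*s) by ring, Real.sin_neg]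
    ring
  have hcn := intervalIntegral.integral_comp_neg (a := -π) (b := π) f
  simp only [neg_neg] at hcn
  have : ∫ x in (-π)..π, f (-x) = -∫ x in (-π)..π, f x := by
    simp_rw [hodd]; exact intervalIntegral.integral_neg
  rw [this] at hcn
  rw [hshift]
  linarith [hcn]

lemma slm_re_eq (ξ : ℂ) (t : ℝ) :
    (ξ * Complex.exp (-t * Complex.I)).re = ‖ξ‖ * Real.cos (t - ξ.arg) := by
  conv_lhs => rw [← Complex.norm_mul_exp_arg_mul_I ξ]
  rw [mul_assoc, ← Complex.exp_add,
    show (↑ξ.arg * Complex.I + -↑t * Complex.I) = ((↑(ξ.arg - t) : ℂ) * Complex.I) by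
      push_cast; ring,
    Complex.re_ofReal_mul, Complex.exp_ofReal_mul_I_re, ← Real.cos_neg, neg_sub]

lemma slm_abs_re_eq {α : ℝ} (ξ : ℂ) (t : ℝ) :
    |(ξ * Complex.exp (-t * Complex.I)).re| ^ α
      = ‖ξ‖ ^ α * |Real.cos (t - ξ.arg)| ^ α := by
  rw [slm_re_eq, _root_.abs_mul, _root_.abs_of_nonneg (norm_nonneg ξ),
    Real.mul_rpow (norm_nonneg ξ) (_root_.abs_nonneg _)]

lemma slm_acos_periodic {α : ℝ} : Function.Periodic (fun s : ℝ => |Real.cos s| ^ α) (2*π) := by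
  intro s; simp [Real.cos_add_two_pi]

lemma slm_denom {α : ℝ} (ξ : ℂ) :
    ∫ t in (0:ℝ)..(2*π), |(ξ * Complex.exp (-t * Complex.I)).re| ^ α
      = ‖ξ‖ ^ α * ∫ s in (0:ℝ)..(2*π), |Real.cos s| ^ α := by
  simp_rw [slm_abs_re_eq (α := α) ξ]
  rw [intervalIntegral.integral_const_mul]
  congr 1
  rw [intervalIntegral.integral_comp_sub_right (fun s => |Real.cos s| ^ α) ξ.arg]
  have := (slm_acos_periodic (α := α)).intervalIntegral_add_eq (0 - ξ.arg) 0
  rw [zero_add] at this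
  rw [show (2*π - ξ.arg) = 0 - ξ.arg + 2*π by ring, this]

lemma slm_numer {α : ℝ} (hα0 : 0 < α) (ξ : ℂ) :
    ∫ t in (0:ℝ)..(2*π),
        ((|(ξ * Complex.exp (-t * Complex.I)).re| ^ α : ℝ) : ℂ)
          * Complex.exp (-2 * t * Complex.I)
      = ((‖ξ‖ ^ α : ℝ) : ℂ) * Complex.exp (-2 * ξ.arg * Complex.I)
          * ((α / (α + 2) * ∫ s in (0:ℝ)..(2*π), |Real.cos s| ^ α : ℝ) : ℂ) := by
  set φ := ξ.arg
  set F : ℝ → ℂ := fun s => ((|Real.cos s| ^ α : ℝ) : ℂ) * Complex.exp (-2 * s * Complex.I)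
    with hF
  have step1 : ∫ t in (0:ℝ)..(2*π),
      ((|(ξ * Complex.exp (-t * Complex.I)).re| ^ α : ℝ) : ℂ) * Complex.exp (-2 * t * Complex.I)
      = ((‖ξ‖ ^ α : ℝ) : ℂ) * Complex.exp (-2 * φ * Complex.I)
          * ∫ t in (0:ℝ)..(2*π), F (t - φ) := by
    rw [← intervalIntegral.integral_const_mul]
    refine intervalIntegral.integral_congr (fun t _ => ?_)
    rw [slm_abs_re_eq (α := α) ξ t]
    show _ = _ * _ * (((|Real.cos (t - φ)| ^ α : ℝ) : ℂ) * Complex.exp (-2 * ↑(t - φ) * Complex.I))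
    have hexp : Complex.exp (-2 * (φ:ℂ) * Complex.I) * Complex.exp (-2 * ((t:ℂ) - φ) * Complex.I)
        = Complex.exp (-2 * t * Complex.I) := by
      rw [← Complex.exp_add]; congr 1; ring
    push_cast
    rw [← hexp]
    ring
  have hper : Function.Periodic F (2*π) := by
    intro s
    simp only [hF, Real.cos_add_two_pi]
    congr 1
    rw [show (-2 * ↑(s + 2*π) * Complex.I) = (-2 * s * Complex.I) + (-2 : ℤ) * (2*π*Complex.I) by
      push_cast; ring, Complex.exp_add, Complex.exp_int_mul_two_pi_mul_I, mul_one]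
  have step2 : ∫ t in (0:ℝ)..(2*π), F (t - φ) = ∫ s in (0:ℝ)..(2*π), F s := by
    rw [intervalIntegral.integral_comp_sub_right F φ]
    have := hper.intervalIntegral_add_eq (0 - φ) 0
    rw [zero_add] at this
    rw [show (2*π - φ) = 0 - φ + 2*π by ring, this]
  have step3 : ∫ s in (0:ℝ)..(2*π), F s
      = ((α / (α + 2) * ∫ s in (0:ℝ)..(2*π), |Real.cos s| ^ α : ℝ) : ℂ) := by
    have hFeq : ∀ s : ℝ, F s = ((|Real.cos s| ^ α * Real.cos (2*s) : ℝ) : ℂ)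
        + ((|Real.cos s| ^ α * Real.sin (2*s) : ℝ) : ℂ) * (-Complex.I) := by
      intro s
      show ((|Real.cos s| ^ α : ℝ) : ℂ) * Complex.exp (-2 * s * Complex.I) = _
      rw [show ((-2 : ℂ) * s * Complex.I) = ((-(2*s) : ℝ) : ℂ) * Complex.I by push_cast; ring,
        Complex.exp_mul_I]
      push_cast
      rw [Complex.cos_neg, Complex.sin_neg]
      ring
    simp_rw [hFeq]
    rw [intervalIntegral.integral_add _ _, intervalIntegral.integral_mul_const,
      intervalIntegral.integral_ofReal, intervalIntegral.integral_ofReal,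
      slm_Jc hα0, slm_Js hα0]
    · push_cast; ring
    · apply Continuous.intervalIntegrable
      exact Complex.continuous_ofReal.comp
        (((continuous_abs.comp Real.continuous_cos).rpow_const (fun _ => Or.inr hα0.le)).mul
          (Real.continuous_cos.comp (continuous_const.mul continuous_id)))
    · apply Continuous.intervalIntegrable
      exact (Complex.continuous_ofReal.comp
        (((continuous_abs.comp Real.continuous_cos).rpow_const (fun _ => Or.inr hα0.le)).mul
          (Real.continuous_sin.comp (continuous_const.mul continuous_id)))).mul continuous_const
  rw [step1, step2, step3]

lemma slm_ratio {α : ℝ} (hα0 : 0 < α) (ξ : ℂ) (hξ : ξ ≠ 0) :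
    (∫ t in (0 : ℝ)..(2 * π),
        ((|(ξ * Complex.exp (-t * Complex.I)).re| ^ α : ℝ) : ℂ)
          * Complex.exp (-2 * t * Complex.I)) /
        ((∫ t in (0 : ℝ)..(2 * π), |(ξ * Complex.exp (-t * Complex.I)).re| ^ α : ℝ) : ℂ)
      = ((α / (α + 2) : ℝ) : ℂ) * ((starRingEnd ℂ) ξ) ^ 2 / ((‖ξ‖ : ℝ) : ℂ) ^ 2 := by
  set R : ℝ := ‖ξ‖ with hR
  set φ : ℝ := ξ.arg with hφ
  have hR0 : 0 < R := norm_pos_iff.mpr hξ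
  have hRα : (0:ℝ) < R ^ α := Real.rpow_pos_of_pos hR0 _
  set I₀ : ℝ := ∫ s in (0:ℝ)..(2*π), |Real.cos s| ^ α with hI₀
  have hI0 : 0 < I₀ := slm_I_pos hα0
  have hconj : (starRingEnd ℂ) ξ = (R:ℂ) * Complex.exp (-(φ:ℂ) * Complex.I) := by
    conv_lhs => rw [← Complex.norm_mul_exp_arg_mul_I ξ]
    rw [map_mul, Complex.conj_ofReal, ← Complex.exp_conj, map_mul, Complex.conj_ofReal,
      Complex.conj_I, ← hR, ← hφ]
    ring_nf
  have hsq : Complex.exp (-(φ:ℂ) * Complex.I) ^ 2 = Complex.exp (-2 * φ * Complex.I) := by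
    rw [sq, ← Complex.exp_add]; congr 1; ring
  rw [slm_numer hα0 ξ, slm_denom (α := α) ξ, hconj, ← hR, ← hφ, ← hI₀]
  have hX : ((R ^ α : ℝ) : ℂ) ≠ 0 := by
    exact_mod_cast Complex.ofReal_ne_zero.mpr hRα.ne'
  have hY : ((I₀ : ℝ) : ℂ) ≠ 0 := Complex.ofReal_ne_zero.mpr hI0.ne'
  have hRC : ((R : ℝ) : ℂ) ≠ 0 := Complex.ofReal_ne_zero.mpr hR0.ne'
  rw [mul_pow, hsq]
  have hα2C : ((α:ℂ) + 2) ≠ 0 := by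
    have h : (0:ℝ) < α + 2 := by linarith
    have := Complex.ofReal_ne_zero.mpr h.ne'
    push_cast at this
    exact this
  push_cast
  field_simp [hα2C]

noncomputable def slmU (ξ : ℂ) (θ : ℝ) : ℝ := (ξ * Complex.exp (-θ * Complex.I)).re

lemma slmU_cont (ξ : ℂ) : Continuous (slmU ξ) := by
  unfold slmU
  fun_prop

lemma slm_conj_polar (r θ : ℝ) :
    (starRingEnd ℂ) (Complex.polarCoord.symm (r, θ)) = (r : ℂ) * Complex.exp (-θ * Complex.I) := by
  rw [Complex.polarCoord_symm_apply]
  show (starRingEnd ℂ) ((r:ℂ) * (↑(Real.cos θ) + ↑(Real.sin θ) * Complex.I)) = _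
  rw [show (-(θ:ℂ)) * Complex.I = ((-θ : ℝ) : ℂ) * Complex.I by push_cast; ring,
    Complex.exp_mul_I]
  simp only [map_mul, Complex.conj_ofReal, map_add, Complex.conj_I]
  push_cast
  rw [Complex.cos_neg, Complex.sin_neg]
  ring

lemma slm_main2 {α : ℝ} (hα0 : 0 < α) (hα2 : α < 2) (ξ : ℂ) (hξ : ξ ≠ 0) :
    (∫ z : ℂ, (1 - Real.cos ((ξ * (starRingEnd ℂ) z).re)) * ‖z‖ ^ (-2 - α))
      = (∫ s in Ioi (0:ℝ), (1 - Real.cos s) / s ^ (1 + α))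
          * ∫ t in (0 : ℝ)..(2 * π), |(ξ * Complex.exp (-t * Complex.I)).re| ^ α := by
  set cα : ℝ := ∫ s in Ioi (0:ℝ), (1 - Real.cos s) / s ^ (1 + α) with hcα
  set G : ℝ × ℝ → ℝ := fun p => (1 - Real.cos (slmU ξ p.2 * p.1)) * p.1 ^ (-(1+α)) with hG
  -- Step A+B : polar coordinates
  have stepAB : (∫ z : ℂ, (1 - Real.cos ((ξ * (starRingEnd ℂ) z).re)) * ‖z‖ ^ (-2 - α))
      = ∫ p in polarCoord.target, G p := by
    rw [← Complex.integral_comp_polarCoord_symm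
      (fun z => (1 - Real.cos ((ξ * (starRingEnd ℂ) z).re)) * ‖z‖ ^ (-2 - α))]
    refine setIntegral_congr_fun (polarCoord.open_target.measurableSet) (fun p hp => ?_)
    obtain ⟨r, θ⟩ := p
    have hr : (0:ℝ) < r := hp.1
    have h1 : (ξ * (starRingEnd ℂ) (Complex.polarCoord.symm (r, θ))).re = slmU ξ θ * r := by
      rw [slm_conj_polar]
      rw [show ξ * ((r:ℂ) * Complex.exp (-θ * Complex.I))
        = (r:ℂ) * (ξ * Complex.exp (-(θ:ℝ) * Complex.I)) by push_cast; ring]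
      rw [Complex.re_ofReal_mul]
      unfold slmU
      ring
    have h2 : ‖Complex.polarCoord.symm (r, θ)‖ = r := by
      rw [Complex.norm_polarCoord_symm, _root_.abs_of_pos hr]
    simp only [hG, smul_eq_mul]
    rw [h1, h2]
    rw [show r * ((1 - Real.cos (slmU ξ θ * r)) * r ^ (-2 - α))
      = (1 - Real.cos (slmU ξ θ * r)) * (r ^ (-2-α) * r) by ring]
    congr 1
    rw [← Real.rpow_add_one hr.ne' (-2-α)]
    congr 1
    ring
  -- measure rewriting
  have hmeas_target : (volume : Measure (ℝ × ℝ)).restrict polarCoord.target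
      = (volume.restrict (Ioi (0:ℝ))).prod (volume.restrict (Ioo (-π) π)) := by
    rw [Measure.prod_restrict, ← Measure.volume_eq_prod]
    rfl
  -- a.e.-measurability of G
  have hGmeas : AEStronglyMeasurable G
      ((volume.restrict (Ioi (0:ℝ))).prod (volume.restrict (Ioo (-π) π))) := by
    apply Measurable.aestronglyMeasurable
    apply Measurable.mul
    · exact (measurable_const.sub ((Real.measurable_cos.comp
        (((slmU_cont ξ).measurable.comp measurable_snd).mul measurable_fst))))
    · exact (measurable_fst.pow measurable_const)
  -- integrability
  have hGint : Integrable G ((volume.restrict (Ioi (0:ℝ))).prod (volume.restrict (Ioo (-π) π))) := by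
    rw [integrable_prod_iff' hGmeas]
    constructor
    · refine Filter.Eventually.of_forall (fun θ => ?_)
      exact slm_scale_int hα0 hα2 (slmU ξ θ)
    · have heq : ∀ θ : ℝ, (∫ r, ‖G (r, θ)‖ ∂(volume.restrict (Ioi (0:ℝ))))
          = cα * |slmU ξ θ| ^ α := by
        intro θ
        rw [show (∫ r, ‖G (r, θ)‖ ∂(volume.restrict (Ioi (0:ℝ))))
            = ∫ r in Ioi (0:ℝ), G (r, θ) from ?_]
        · rw [hG]; simp only
          rw [slm_scale hα0 hα2 (slmU ξ θ), ← hcα, mul_comm]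
        · refine setIntegral_congr_fun measurableSet_Ioi (fun r hr => ?_)
          have hr0 : (0:ℝ) < r := hr
          rw [hG]; simp only
          rw [Real.norm_eq_abs, _root_.abs_of_nonneg]
          have h1 : Real.cos (slmU ξ θ * r) ≤ 1 := Real.cos_le_one _
          have h2 : (0:ℝ) ≤ r ^ (-(1+α)) := Real.rpow_nonneg hr0.le _
          nlinarith
      refine (Integrable.congr ?_ (Filter.Eventually.of_forall (fun θ => (heq θ).symm)))
      have hcont : Continuous (fun θ : ℝ => cα * |slmU ξ θ| ^ α) :=
        continuous_const.mul (((slmU_cont ξ).abs).rpow_const (fun _ => Or.inr hα0.le))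
      exact (hcont.integrableOn_Icc (a := -π) (b := π)).mono_set Ioo_subset_Icc_self
  -- Fubini
  have stepE : ∫ p in polarCoord.target, G p
      = ∫ θ in Ioo (-π) π, ∫ r in Ioi (0:ℝ), G (r, θ) := by
    rw [show (∫ p in polarCoord.target, G p)
      = ∫ p, G p ∂((volume.restrict (Ioi (0:ℝ))).prod (volume.restrict (Ioo (-π) π))) by
        rw [← hmeas_target]]
    exact integral_prod_symm G hGint
  -- inner integral
  have stepF : ∫ θ in Ioo (-π) π, ∫ r in Ioi (0:ℝ), G (r, θ)
      = cα * ∫ θ in Ioo (-π) π, |slmU ξ θ| ^ α := by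
    rw [← MeasureTheory.integral_const_mul]
    refine setIntegral_congr_fun measurableSet_Ioo (fun θ _ => ?_)
    rw [hG]; simp only
    rw [slm_scale hα0 hα2 (slmU ξ θ), ← hcα, mul_comm]
  -- interval integral and periodicity
  have stepG : ∫ θ in Ioo (-π) π, |slmU ξ θ| ^ α
      = ∫ t in (0 : ℝ)..(2 * π), |(ξ * Complex.exp (-t * Complex.I)).re| ^ α := by
    have hple : -π ≤ π := by linarith [Real.pi_pos]
    rw [← MeasureTheory.integral_Ioc_eq_integral_Ioo, ← intervalIntegral.integral_of_le hple]
    have hper : Function.Periodic (fun θ => |slmU ξ θ| ^ α) (2*π) := by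
      intro θ
      have : slmU ξ (θ + 2*π) = slmU ξ θ := by
        unfold slmU
        congr 2
        rw [show (-(↑(θ + 2*π)) : ℂ) * Complex.I
          = -θ * Complex.I + (-1 : ℤ) * (2 * π * Complex.I) by push_cast; ring,
          Complex.exp_add, Complex.exp_int_mul_two_pi_mul_I, mul_one]
      simp only [this]
    have := hper.intervalIntegral_add_eq (-π) 0
    rw [zero_add, show -π + 2*π = π by ring] at this
    rw [this]
    unfold slmU
    rfl
  rw [stepAB, stepE, stepF, stepG]

theorem stable_levy_multiplier (α : ℝ) (hα0 : 0 < α) (hα2 : α < 2) (ξ : ℂ) (hξ : ξ ≠ 0) :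
    let cα : ℝ := ∫ s in Set.Ioi (0 : ℝ), (1 - Real.cos s) / s ^ (1 + α)
    0 < cα ∧
    (∫ z : ℂ, (1 - Real.cos ((ξ * (starRingEnd ℂ) z).re)) * ‖z‖ ^ (-2 - α))
      = cα * ∫ t in (0 : ℝ)..(2 * π), |(ξ * Complex.exp (-t * Complex.I)).re| ^ α ∧
    (∫ t in (0 : ℝ)..(2 * π),
        ((|(ξ * Complex.exp (-t * Complex.I)).re| ^ α : ℝ) : ℂ)
          * Complex.exp (-2 * t * Complex.I)) /
        ((∫ t in (0 : ℝ)..(2 * π), |(ξ * Complex.exp (-t * Complex.I)).re| ^ α : ℝ) : ℂ)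
      = ((α / (α + 2) : ℝ) : ℂ) * ((starRingEnd ℂ) ξ) ^ 2 / ((‖ξ‖ : ℝ) : ℂ) ^ 2 := by
  intro cα
  refine ⟨slm_pos hα0 hα2, ?_, slm_ratio hα0 ξ hξ⟩
  exact slm_main2 hα0 hα2 ξ hξ
end

section
/- Let Ψ : M^{2×2}(ℝ) → ℝ be defined by Ψ(A) = -U(z, w) where, for A = [[a,b],[c,d]], z = (a+d) + i(c-b) and w = (a-d) + i(c+b), and U : ℂ × ℂ → ℝ satisfies: for all z, w, h, k ∈ ℂ with |k| ≤ |h|, the map t ↦ U(z + th, w + tk) is concave on ℝ. Then Ψ is rank-one convex: for every A ∈ M^{2×2}(ℝ) and all h', k' ∈ ℝ², the map t ↦ Ψ(A + t h'⊗k') is convex on ℝ. -/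
open Real Complex

/-- Burkholder's biconcavity implies rank-one convexity of the associated function `Ψ`
on 2×2 real matrices. -/
theorem rank_one_convex_of_biconcave (U : ℂ → ℂ → ℝ)
    (hU : ∀ z w h k : ℂ, ‖k‖ ≤ ‖h‖ →
      ConcaveOn ℝ Set.univ (fun t : ℝ => U (z + t * h) (w + t * k))) :
    ∀ (A : Matrix (Fin 2) (Fin 2) ℝ) (h' k' : Fin 2 → ℝ),
      ConvexOn ℝ Set.univ (fun t : ℝ =>
        (fun M : Matrix (Fin 2) (Fin 2) ℝ =>
          -U (((M 0 0 + M 1 1 : ℝ) : ℂ) + ((M 1 0 - M 0 1 : ℝ) : ℂ) * Complex.I)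
             (((M 0 0 - M 1 1 : ℝ) : ℂ) + ((M 1 0 + M 0 1 : ℝ) : ℂ) * Complex.I))
          (A + t • Matrix.vecMulVec h' k')) := by
  intro A h' k'
  set z : ℂ := ((A 0 0 + A 1 1 : ℝ) : ℂ) + ((A 1 0 - A 0 1 : ℝ) : ℂ) * Complex.I with hz
  set w : ℂ := ((A 0 0 - A 1 1 : ℝ) : ℂ) + ((A 1 0 + A 0 1 : ℝ) : ℂ) * Complex.I with hw
  set h : ℂ := ((h' 0 * k' 0 + h' 1 * k' 1 : ℝ) : ℂ) +
      ((h' 1 * k' 0 - h' 0 * k' 1 : ℝ) : ℂ) * Complex.I with hh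
  set k : ℂ := ((h' 0 * k' 0 - h' 1 * k' 1 : ℝ) : ℂ) +
      ((h' 1 * k' 0 + h' 0 * k' 1 : ℝ) : ℂ) * Complex.I with hk
  have habs : ‖k‖ ≤ ‖h‖ := by
    apply le_of_eq
    rw [Complex.norm_def, Complex.norm_def]
    congr 1
    simp only [hh, hk, Complex.normSq_apply, Complex.add_re, Complex.add_im,
      Complex.mul_re, Complex.mul_im, Complex.ofReal_re, Complex.ofReal_im,
      Complex.I_re, Complex.I_im]
    ring
  have key : ConvexOn ℝ Set.univ (-fun t : ℝ => U (z + t * h) (w + t * k)) := (hU z w h k habs).neg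
  convert key using 2 with t
  simp only [Pi.neg_apply, neg_inj]
  congr 1 <;>
    · apply Complex.ext <;>
        simp only [hz, hw, hh, hk, Matrix.add_apply, Matrix.smul_apply, smul_eq_mul, Matrix.vecMulVec_apply, Complex.add_re, Complex.add_im, Complex.mul_re,
          Complex.mul_im, Complex.ofReal_re, Complex.ofReal_im, Complex.I_re, Complex.I_im] <;>
        ring
end
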